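/- arXiv:2112.07073 — 6 statements merged into one kernel-verified Lean document; each statement's English description precedes it below -/
import Mathlib

section
/- Let λ ∈ [0, 1) and let f be analytic on the open unit disk 𝔻 with f(0) = 0, f′(0) = 1, f(z) ≠ 0 for all z ∈ 𝔻 \ {0}, and f′(z) ≠ 0 for all z ∈ 𝔻. Define R_λ(z) = λ·z f′(z)/f(z) + (1−λ)·(1 + z f″(z)/f′(z)) and C(λ) = (1−λ)·√(1 + 2/(1−λ)). If for every z ∈ 𝔻 the value R_λ(z) does not belong to the set {iy : y ∈ ℝ, |y| ≥ C(λ)} (the two slits along the imaginary axis), then Re(z f′(z)/f(z)) > 0 for all z ∈ 𝔻. -/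
open Complex Metric Filter Set Topology

lemma radial_le {G : ℂ → ℝ} {z : ℂ} {b : ℝ} (hc : ContinuousAt G z)
    (h : ∀ t : ℝ, t ∈ Set.Ico (0:ℝ) 1 → G ((t:ℂ) * z) ≤ b) : G z ≤ b := by
  have hcomp : ContinuousAt (fun t : ℝ => G ((t:ℂ) * z)) 1 := by
    apply ContinuousAt.comp (by simpa using hc)
    fun_prop
  have ht : Tendsto (fun t : ℝ => G ((t:ℂ) * z)) (𝓝[<] (1:ℝ)) (𝓝 (G z)) := by
    have := hcomp.tendsto
    simp only [Complex.ofReal_one, one_mul] at this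
    exact this.mono_left nhdsWithin_le_nhds
  refine le_of_tendsto ht ?_
  filter_upwards [Ioo_mem_nhdsLT_of_mem (by norm_num : (1:ℝ) ∈ Set.Ioc 0 1)] with t htt
  exact h t ⟨htt.1.le, htt.2⟩

lemma normSq_hasDerivAt {F : ℝ → ℂ} {F' : ℂ} {x : ℝ} (h : HasDerivAt F F' x) :
    HasDerivAt (fun t => Complex.normSq (F t)) (2 * ((starRingEnd ℂ) (F x) * F').re) x := by
  have hre : HasDerivAt (fun t => (F t).re) F'.re x := by
    exact (Complex.reCLM.hasFDerivAt.comp_hasDerivAt x h)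
  have him : HasDerivAt (fun t => (F t).im) F'.im x := by
    exact (Complex.imCLM.hasFDerivAt.comp_hasDerivAt x h)
  have key := ((hre.mul hre).add (him.mul him))
  have h2 : F'.re * (F x).re + (F x).re * F'.re + (F'.im * (F x).im + (F x).im * F'.im)
      = 2 * ((starRingEnd ℂ) (F x) * F').re := by
    simp [Complex.mul_re]; ring
  rw [← h2]
  simp only [Complex.normSq_apply]; exact key

lemma slit_bound {mu k a C : ℝ} (hmu : 0 < mu) (hk : 1 ≤ k) (ha : 0 < a) (hC0 : 0 ≤ C)
    (hCsq : C^2 = mu^2 + 2*mu) : C ≤ a + mu * k * (1 + a^2) / (2*a) := by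
  have h1 : 2*a*(a + mu * k * (1 + a^2) / (2*a)) = 2*a^2 + mu*k*(1+a^2) := by
    field_simp
  have h2 : 2*a^2 + mu*(1+a^2) ≤ 2*a*(a + mu * k * (1 + a^2) / (2*a)) := by
    rw [h1]
    nlinarith [mul_pos hmu (by positivity : (0:ℝ) < 1+a^2)]
  have hc : (2*a*C)^2 = 4*a^2*(mu^2+2*mu) := by rw [← hCsq]; ring
  have h3 : (2*a*C)^2 ≤ (2*a^2 + mu*(1+a^2))^2 := by
    rw [hc]
    nlinarith [sq_nonneg ((2+mu)*a^2 - mu)]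
  have hXY : 0 < 2*a*C + (2*a^2 + mu*(1+a^2)) := by nlinarith [mul_nonneg ha.le hC0]
  have h5 : 2*a*C ≤ 2*a^2 + mu*(1+a^2) := by nlinarith [h3, hXY]
  have h6 : 2*a*C ≤ 2*a*(a + mu * k * (1 + a^2) / (2*a)) := h5.trans h2
  nlinarith [h6, ha]

set_option maxHeartbeats 1600000 in
theorem stmt_1 (lam : ℝ) (hlam : lam ∈ Set.Ico (0 : ℝ) 1)
    (f : ℂ → ℂ) (hanal : DifferentiableOn ℂ f (ball (0 : ℂ) 1))
    (hf0 : f 0 = 0) (hf'0 : deriv f 0 = 1)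
    (hfne : ∀ z ∈ ball (0 : ℂ) 1, z ≠ 0 → f z ≠ 0)
    (hf'ne : ∀ z ∈ ball (0 : ℂ) 1, deriv f z ≠ 0)
    (R : ℂ → ℂ)
    (hR : ∀ z, R z = (lam : ℂ) * (z * deriv f z / f z) +
      (1 - (lam : ℂ)) * (1 + z * deriv (deriv f) z / deriv f z))
    (C : ℝ) (hC : C = (1 - lam) * Real.sqrt (1 + 2 / (1 - lam)))
    (hslit : ∀ z ∈ ball (0 : ℂ) 1, z ≠ 0 → ∀ y : ℝ, C ≤ |y| → R z ≠ y * I) :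
    ∀ z ∈ ball (0 : ℂ) 1, z ≠ 0 → 0 < (z * deriv f z / f z).re := by
  have hball : ball (0:ℂ) 1 ∈ 𝓝 (0:ℂ) := ball_mem_nhds _ one_pos
  set g : ℂ → ℂ := dslope f 0 with hg_def
  have hgd : DifferentiableOn ℂ g (ball 0 1) :=
    (Complex.differentiableOn_dslope hball).2 hanal
  have hg0 : g 0 = 1 := by rw [hg_def, dslope_same, hf'0]
  have hgz : ∀ z : ℂ, z ≠ 0 → g z = f z / z := by
    intro z hz
    rw [hg_def, dslope_of_ne _ hz, slope_def_field, hf0, sub_zero, sub_zero]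
  have hgne : ∀ z ∈ ball (0:ℂ) 1, g z ≠ 0 := by
    intro z hz
    rcases eq_or_ne z 0 with rfl | hz0
    · rw [hg0]; exact one_ne_zero
    · rw [hgz z hz0]; exact div_ne_zero (hfne z hz hz0) hz0
  set p : ℂ → ℂ := fun z => deriv f z / g z with hp_def
  have hderiv_anal : AnalyticOnNhd ℂ (deriv f) (ball 0 1) :=
    (hanal.analyticOnNhd isOpen_ball).deriv
  have hpd : DifferentiableOn ℂ p (ball 0 1) :=
    DifferentiableOn.div hderiv_anal.differentiableOn hgd hgne
  have hp0 : p 0 = 1 := by rw [hp_def]; simp [hf'0, hg0]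
  have hp_eq : ∀ z ∈ ball (0:ℂ) 1, z ≠ 0 → p z = z * deriv f z / f z := by
    intro z hz hz0
    rw [hp_def]
    simp only
    rw [hgz z hz0]
    field_simp
  -- contradiction setup
  intro z1 hz1 hz1ne
  by_contra hcon
  push_neg at hcon
  have hRe1 : (p z1).re ≤ 0 := by rw [hp_eq z1 hz1 hz1ne]; exact hcon
  -- the compact set K and minimal point z0
  have hz1n : ‖z1‖ < 1 := by simpa [mem_ball_zero_iff] using hz1
  set K : Set ℂ := closedBall 0 ‖z1‖ ∩ (fun z => (p z).re) ⁻¹' (Iic 0) with hK_def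
  have hKball : K ⊆ ball (0:ℂ) 1 := fun z hz => by
    have := hz.1; rw [mem_closedBall_zero_iff] at this
    exact mem_ball_zero_iff.2 (lt_of_le_of_lt this hz1n)
  have hsubball : closedBall (0:ℂ) ‖z1‖ ⊆ ball (0:ℂ) 1 := fun z hz =>
    mem_ball_zero_iff.2 (lt_of_le_of_lt (mem_closedBall_zero_iff.1 hz) hz1n)
  have hKclosed : IsClosed K :=
    ContinuousOn.preimage_isClosed_of_isClosed
      (Complex.continuous_re.comp_continuousOn (hpd.continuousOn.mono hsubball))
      Metric.isClosed_closedBall isClosed_Iic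
  have hKcompact : IsCompact K :=
    (isCompact_closedBall (0:ℂ) ‖z1‖).of_isClosed_subset hKclosed inter_subset_left
  have hz1K : z1 ∈ K := ⟨mem_closedBall_zero_iff.2 le_rfl, hRe1⟩
  obtain ⟨z0, hz0K, hz0min⟩ := hKcompact.exists_isMinOn ⟨z1, hz1K⟩ continuous_norm.continuousOn
  set r : ℝ := ‖z0‖ with hr_def
  have hrz1 : r ≤ ‖z1‖ := mem_closedBall_zero_iff.1 hz0K.1
  have hr1 : r < 1 := lt_of_le_of_lt hrz1 hz1n
  have hz0b : z0 ∈ ball (0:ℂ) 1 := hKball hz0K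
  have hrpos : 0 < r := by
    rcases (norm_nonneg z0).lt_or_eq with h | h
    · exact h
    · exfalso
      have hz00 : z0 = 0 := by rwa [eq_comm, norm_eq_zero] at h
      have := hz0K.2
      rw [hz00] at this
      simp only [Set.mem_preimage, Set.mem_Iic, hp0] at this
      norm_num at this
  have hz0ne : z0 ≠ 0 := norm_pos_iff.1 hrpos
  have hpos : ∀ z : ℂ, ‖z‖ < r → 0 < (p z).re := by
    intro z hz
    by_contra hle
    push_neg at hle
    have hzK : z ∈ K := ⟨mem_closedBall_zero_iff.2 (le_trans hz.le hrz1), hle⟩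
    exact absurd (hz0min hzK) (not_le.2 hz)
  have hRe_ge : ∀ z : ℂ, ‖z‖ = r → 0 ≤ (p z).re := by
    intro z hz
    have hzb : z ∈ ball (0:ℂ) 1 := mem_ball_zero_iff.2 (hz ▸ hr1)
    have hcont : ContinuousAt (fun w => -(p w).re) z :=
      ((Complex.continuous_re.comp_continuousOn hpd.continuousOn).continuousAt
        (isOpen_ball.mem_nhds hzb)).neg
    have h : -(p z).re ≤ 0 := by
      apply radial_le hcont
      intro t ht
      have hlt : ‖(t:ℂ) * z‖ < r := by
        rw [norm_mul, Complex.norm_real, hz]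
        rcases eq_or_lt_of_le ht.1 with h0 | h0
        · rw [← h0]; simpa using hrpos
        · rw [Real.norm_eq_abs, abs_of_pos h0]
          nlinarith [ht.2, hrpos]
      have := hpos _ hlt
      show -(p ((t:ℂ) * z)).re ≤ 0
      linarith
    linarith
  -- p z0 = a*I
  have hRez0 : (p z0).re = 0 := le_antisymm hz0K.2 (hRe_ge z0 rfl)
  set a : ℝ := (p z0).im with ha_def
  have hpz0 : p z0 = (a:ℂ) * I := by
    apply Complex.ext <;> simp [hRez0, ha_def]
  have hpz0ne : p z0 ≠ 0 :=
    div_ne_zero (hf'ne z0 hz0b) (hgne z0 hz0b)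
  have hane : a ≠ 0 := by
    intro h
    apply hpz0ne
    rw [hpz0, h]; simp
  have h1pz0 : 1 + p z0 ≠ 0 := by
    intro h
    have : (1 + p z0).re = 0 := by rw [h]; simp
    rw [Complex.add_re, Complex.one_re, hRez0] at this
    norm_num at this
  -- the open set U and radius ρ
  set U : Set ℂ := ball (0:ℂ) 1 ∩ (fun z => p z) ⁻¹' {(-1:ℂ)}ᶜ with hU_def
  have hUopen : IsOpen U :=
    hpd.continuousOn.isOpen_inter_preimage isOpen_ball (isOpen_compl_singleton)
  have hUsub : closedBall (0:ℂ) r ⊆ U := by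
    intro z hz
    rw [mem_closedBall_zero_iff] at hz
    have hzb : z ∈ ball (0:ℂ) 1 := mem_ball_zero_iff.2 (lt_of_le_of_lt hz hr1)
    refine ⟨hzb, ?_⟩
    simp only [Set.mem_preimage, Set.mem_compl_iff, Set.mem_singleton_iff]
    intro h
    have hge : 0 ≤ (p z).re := by
      rcases eq_or_lt_of_le hz with h' | h'
      · exact hRe_ge z h'
      · exact (hpos z h').le
    rw [h] at hge
    norm_num at hge
  obtain ⟨δ, hδpos, hδsub⟩ :=
    (isCompact_closedBall (0:ℂ) r).exists_cthickening_subset_open hUopen hUsub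
  set ρ : ℝ := δ + r with hρ_def
  have hrρ : r < ρ := by simp [hρ_def]; linarith
  have hρsub : ball (0:ℂ) ρ ⊆ U := by
    intro z hz
    apply hδsub
    rw [cthickening_closedBall hδpos.le hrpos.le]
    exact ball_subset_closedBall hz
  have hρball : ball (0:ℂ) ρ ⊆ ball (0:ℂ) 1 := fun z hz => (hρsub hz).1
  have hρne : ∀ z ∈ ball (0:ℂ) ρ, 1 + p z ≠ 0 := by
    intro z hz h
    have := (hρsub hz).2
    simp only [Set.mem_preimage, Set.mem_compl_iff, Set.mem_singleton_iff] at this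
    apply this
    linear_combination h
  -- the function w
  set w : ℂ → ℂ := fun z => (1 - p z) / (1 + p z) with hw_def
  have hwd : DifferentiableOn ℂ w (ball (0:ℂ) ρ) := by
    apply DifferentiableOn.div
    · exact (differentiableOn_const 1).sub (hpd.mono hρball)
    · exact (differentiableOn_const 1).add (hpd.mono hρball)
    · exact hρne
  have hw0 : w 0 = 0 := by rw [hw_def]; simp [hp0]
  have hmaps : MapsTo w (ball (0:ℂ) r) (ball (w 0) 1) := by
    intro z hz
    rw [mem_ball_zero_iff] at hz
    have hre : 0 < (p z).re := hpos z hz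
    have hne : 1 + p z ≠ 0 := hρne z (mem_ball_zero_iff.2 (lt_trans hz hrρ))
    rw [hw0, mem_ball_zero_iff, hw_def]
    simp only [norm_div]
    rw [div_lt_one (norm_pos_iff.2 hne)]
    have h2 : Complex.normSq (1 - p z) < Complex.normSq (1 + p z) := by
      simp only [Complex.normSq_apply, Complex.sub_re, Complex.sub_im, Complex.add_re,
        Complex.add_im, Complex.one_re, Complex.one_im]
      nlinarith [hre]
    have h3 := Real.sqrt_lt_sqrt (Complex.normSq_nonneg _) h2
    rwa [← Complex.norm_def, ← Complex.norm_def] at h3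
  -- q = dslope w 0 and the Schwarz bound
  set q : ℂ → ℂ := dslope w 0 with hq_def
  have hqball : ∀ z ∈ ball (0:ℂ) r, ‖q z‖ ≤ 1 / r :=
    fun z hz => Complex.norm_dslope_le_div_of_mapsTo_ball
      (hwd.mono (ball_subset_ball hrρ.le)) (hmaps.mono_right ball_subset_closedBall) hz
  have hqdiff : ∀ z ∈ ball (0:ℂ) ρ, z ≠ 0 → DifferentiableAt ℂ q z := by
    intro z hz hzne
    exact (differentiableAt_dslope_of_ne hzne).2
      ((hwd.differentiableAt (isOpen_ball.mem_nhds hz)))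
  have hqb : ∀ z : ℂ, ‖z‖ ≤ r → ‖q z‖ ≤ 1 / r := by
    intro z hz
    rcases lt_or_eq_of_le hz with h | h
    · exact hqball z (mem_ball_zero_iff.2 h)
    · have hzρ : z ∈ ball (0:ℂ) ρ := mem_ball_zero_iff.2 (h.trans_lt hrρ)
      have hzne : z ≠ 0 := by
        intro h0; rw [h0] at h; simp at h; exact absurd h.symm (ne_of_gt hrpos)
      apply radial_le (G := fun w => ‖q w‖)
      · exact ((hqdiff z hzρ hzne).continuousAt.norm)
      · intro t ht
        apply hqball
        rw [mem_ball_zero_iff, norm_mul, Complex.norm_real, Real.norm_eq_abs, h]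
        rcases eq_or_lt_of_le ht.1 with h0 | h0
        · rw [← h0]; simpa using hrpos
        · rw [abs_of_pos h0]; nlinarith [ht.2, hrpos]
  -- value of q at z0
  have hz0ρ : z0 ∈ ball (0:ℂ) ρ := mem_ball_zero_iff.2 hrρ
  have hqz0 : q z0 = w z0 / z0 := by
    rw [hq_def, dslope_of_ne _ hz0ne, slope_def_field, hw0, sub_zero, sub_zero]
  have hwz0 : w z0 = (1 - (a:ℂ)*I)/(1 + (a:ℂ)*I) := by
    rw [hw_def]; simp only [hpz0]
  have hnorm1 : ‖(1 - (a:ℂ)*I)‖ = ‖(1 + (a:ℂ)*I)‖ := by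
    rw [Complex.norm_def, Complex.norm_def]
    congr 1
    simp only [Complex.normSq_apply, Complex.sub_re, Complex.sub_im, Complex.add_re,
      Complex.add_im, Complex.one_re, Complex.one_im, Complex.mul_re, Complex.mul_im,
      Complex.I_re, Complex.I_im, Complex.ofReal_re, Complex.ofReal_im]
    ring
  have h1aI : (1 : ℂ) + (a:ℂ)*I ≠ 0 := by
    rw [← hpz0]; exact h1pz0
  have hnwz0 : ‖w z0‖ = 1 := by
    rw [hwz0, norm_div, hnorm1, div_self (norm_ne_zero_iff.2 h1aI)]
  have hnqz0 : ‖q z0‖ = 1 / r := by rw [hqz0, norm_div, hnwz0, ← hr_def]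
  have hqz0ne : q z0 ≠ 0 := by
    intro h
    rw [h, norm_zero] at hnqz0
    exact absurd hnqz0.symm (by positivity)
  -- derivative of q at z0
  set d : ℂ := deriv q z0 with hd_def
  have hqd : HasDerivAt q d z0 := (hqdiff z0 hz0ρ hz0ne).hasDerivAt
  -- circle direction
  have hcirc : HasDerivAt (fun θ : ℝ => q (z0 * Complex.exp ((θ:ℂ) * I))) (d * (z0 * I)) 0 := by
    have h2 : HasDerivAt (fun ζ : ℂ => Complex.exp (ζ * I)) I 0 := by
      have := (Complex.hasDerivAt_exp ((0:ℂ)*I)).comp 0 ((hasDerivAt_id (0:ℂ)).mul_const I)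
      simp only [Function.comp_def, id, zero_mul, Complex.exp_zero, one_mul] at this
      exact this
    have h1 : HasDerivAt (fun ζ : ℂ => z0 * Complex.exp (ζ * I)) (z0 * I) 0 := by
      simpa [mul_comm] using h2.const_mul z0
    have hq' : HasDerivAt q d (z0 * Complex.exp ((0:ℂ) * I)) := by
      simpa using hqd
    have h3 := (hq'.comp 0 h1).comp_ofReal (z := 0)
    simpa [Function.comp] using h3
  have hψc := normSq_hasDerivAt hcirc
  have hF0 : q (z0 * Complex.exp ((((0:ℝ)):ℂ) * I)) = q z0 := by norm_num
  rw [hF0] at hψc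
  have hmax : IsLocalMax (fun θ : ℝ => Complex.normSq (q (z0 * Complex.exp ((θ:ℂ) * I)))) 0 := by
    apply Filter.Eventually.of_forall
    intro θ
    have hn : ‖z0 * Complex.exp ((θ:ℂ)*I)‖ = r := by
      rw [norm_mul, Complex.norm_exp_ofReal_mul_I, mul_one]
    have hb := hqb _ (le_of_eq hn)
    simp only [Complex.ofReal_zero, zero_mul, Complex.exp_zero, mul_one]
    rw [Complex.normSq_eq_norm_sq, Complex.normSq_eq_norm_sq,
      hnqz0]
    exact pow_le_pow_left₀ (norm_nonneg _) hb 2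
  have hder0 := hmax.hasDerivAt_eq_zero hψc
  set m : ℂ := (starRingEnd ℂ) (q z0) * (d * z0) with hm_def
  have hIm : m.im = 0 := by
    have hrw : (starRingEnd ℂ) (q z0) * (d * (z0 * I)) = m * I := by rw [hm_def]; ring
    rw [hrw] at hder0
    simp only [Complex.mul_I_re] at hder0
    linarith
  -- radial direction
  have hrad : HasDerivAt (fun t : ℝ => q ((t:ℂ) * z0)) (d * z0) 1 := by
    have h1 : HasDerivAt (fun ζ : ℂ => ζ * z0) z0 1 := by
      simpa using (hasDerivAt_id (1:ℂ)).mul_const z0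
    have hq' : HasDerivAt q d ((1:ℂ) * z0) := by rwa [one_mul]
    have h3 := (hq'.comp 1 h1).comp_ofReal (z := 1)
    simpa [Function.comp] using h3
  have hψr := normSq_hasDerivAt hrad
  have hF1 : q ((((1:ℝ)):ℂ) * z0) = q z0 := by norm_num
  rw [hF1] at hψr
  have hRem : 0 ≤ m.re := by
    have hslope := hasDerivAt_iff_tendsto_slope.1 hψr
    have hmono : 𝓝[<] (1:ℝ) ≤ 𝓝[≠] (1:ℝ) := nhdsWithin_mono _ (fun x hx => ne_of_lt hx)
    have hkey : 0 ≤ 2 * ((starRingEnd ℂ) (q z0) * (d * z0)).re := by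
      refine ge_of_tendsto (hslope.mono_left hmono) ?_
      filter_upwards [Ioo_mem_nhdsLT_of_mem (by norm_num : (1:ℝ) ∈ Set.Ioc 0 1)] with t ht
      rw [slope_def_field]
      refine div_nonneg_iff.2 (Or.inr ⟨?_, ?_⟩)
      · have hle : ‖(t:ℂ) * z0‖ ≤ r := by
          rw [norm_mul, Complex.norm_real, Real.norm_eq_abs, abs_of_pos ht.1]
          nlinarith [ht.2.le, hrpos]
        have hb := hqb _ hle
        have h1 : Complex.normSq (q ((t:ℂ) * z0)) ≤ Complex.normSq (q z0) := by
          rw [Complex.normSq_eq_norm_sq, Complex.normSq_eq_norm_sq,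
            hnqz0]
          exact pow_le_pow_left₀ (norm_nonneg _) hb 2
        have h2 : Complex.normSq (q ((((1:ℝ)):ℂ) * z0)) = Complex.normSq (q z0) := by
          rw [hF1]
        simp only [h2]
        linarith
      · linarith [ht.2]
    rw [← hm_def] at hkey
    linarith
  have hm_real : m = ((m.re : ℝ):ℂ) := by
    apply Complex.ext
    · simp
    · simp [hIm]
  -- z0 * d in terms of q z0
  have hqq : (starRingEnd ℂ) (q z0) * q z0 = (((1/r^2 : ℝ)):ℂ) := by
    rw [mul_comm, Complex.mul_conj]
    congr 1
    rw [Complex.normSq_eq_norm_sq, hnqz0]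
    field_simp
  have hzd : d * z0 = ((r^2 * m.re : ℝ):ℂ) * q z0 := by
    have h1 : (((1/r^2 : ℝ)):ℂ) * (d * z0) = m * q z0 := by
      rw [hm_def, ← hqq]; ring
    have hrr : ((r:ℝ):ℂ) ≠ 0 := Complex.ofReal_ne_zero.2 (ne_of_gt hrpos)
    calc d * z0 = ((r^2:ℝ):ℂ) * ((((1/r^2 : ℝ)):ℂ) * (d * z0)) := by
          push_cast
          field_simp
      _ = ((r^2:ℝ):ℂ) * (m * q z0) := by rw [h1]
      _ = ((r^2 * m.re : ℝ):ℂ) * q z0 := by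
          conv_lhs => rw [hm_real]
          push_cast
          ring
  -- k
  set k : ℝ := 1 + r^2 * m.re with hk_def
  have hk1 : 1 ≤ k := by
    rw [hk_def]
    nlinarith [hRem, sq_nonneg r]
  have hsum : q z0 + z0 * d = ((k:ℝ):ℂ) * q z0 := by
    rw [hk_def, mul_comm z0 d, hzd]
    push_cast
    ring
  -- two derivatives of w
  have hwq : ∀ z : ℂ, w z = z * q z := by
    intro z
    have h := sub_smul_dslope w 0 z
    rw [sub_zero, hw0, sub_zero, smul_eq_mul] at h
    rw [← h, hq_def]
  have hwd1 : HasDerivAt w (((k:ℝ):ℂ) * q z0) z0 := by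
    have h1 : HasDerivAt (fun z : ℂ => z * q z) (1 * q z0 + z0 * d) z0 :=
      (hasDerivAt_id z0).mul hqd
    rw [one_mul] at h1
    rw [← hsum]
    have : w = fun z : ℂ => z * q z := funext hwq
    rw [this]
    exact h1
  set p' : ℂ := deriv p z0 with hp'_def
  have hpda : HasDerivAt p p' z0 := (hpd.differentiableAt (isOpen_ball.mem_nhds hz0b)).hasDerivAt
  have hwd2 : HasDerivAt w (((0 - p') * (1 + p z0) - (1 - p z0) * (0 + p')) / (1 + p z0)^2) z0 :=
    HasDerivAt.div ((hasDerivAt_const z0 (1:ℂ)).sub hpda) ((hasDerivAt_const z0 (1:ℂ)).add hpda)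
      h1pz0
  have heq := hwd2.unique hwd1
  clear_value a k p'
  -- key identity : z0 * p' = -k(1+a^2)/2
  have hzp' : z0 * p' = -((k:ℝ):ℂ) * (1 + (a:ℂ)^2) / 2 := by
    have h2 : q z0 = (1 - (a:ℂ)*I) / ((1 + (a:ℂ)*I) * z0) := by
      rw [hqz0, hwz0]
      field_simp
    rw [hpz0, h2] at heq
    field_simp at heq
    have hc2 : (-2 : ℂ) * (1 + (a:ℂ)*I) ≠ 0 := by
      intro h
      rcases mul_eq_zero.1 h with h | h
      · norm_num at h
      · exact h1aI h
    apply mul_left_cancel₀ hc2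
    linear_combination (1 + (a:ℂ)*I) * heq + (-((k:ℝ):ℂ) * (a:ℂ)^2 * (1 + (a:ℂ)*I)) * Complex.I_sq
  -- express deriv p z0 via f
  have hfz0 : f z0 ≠ 0 := hfne z0 hz0b hz0ne
  have hAne : deriv f z0 ≠ 0 := hf'ne z0 hz0b
  have hf'at : HasDerivAt f (deriv f z0) z0 :=
    (hanal.differentiableAt (isOpen_ball.mem_nhds hz0b)).hasDerivAt
  have hf''at : HasDerivAt (deriv f) (deriv (deriv f) z0) z0 :=
    ((hderiv_anal z0 hz0b).differentiableAt).hasDerivAt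
  have hloc : p =ᶠ[𝓝 z0] (fun z => z * deriv f z / f z) := by
    filter_upwards [isOpen_ball.mem_nhds hz0b, eventually_ne_nhds hz0ne] with z hzb hzne
    exact hp_eq z hzb hzne
  have htar : HasDerivAt (fun z : ℂ => z * deriv f z / f z)
      (((1 * deriv f z0 + z0 * deriv (deriv f) z0) * f z0 - z0 * deriv f z0 * deriv f z0) / f z0 ^ 2)
      z0 := HasDerivAt.div ((hasDerivAt_id z0).mul hf''at) hf'at hfz0
  have hpda2 : HasDerivAt p
      (((1 * deriv f z0 + z0 * deriv (deriv f) z0) * f z0 - z0 * deriv f z0 * deriv f z0) / f z0 ^ 2)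
      z0 := htar.congr_of_eventuallyEq hloc
  have hp'E : p' = ((1 * deriv f z0 + z0 * deriv (deriv f) z0) * f z0
      - z0 * deriv f z0 * deriv f z0) / f z0 ^ 2 := hpda.unique hpda2
  have hpz0f : p z0 = z0 * deriv f z0 / f z0 := hp_eq z0 hz0b hz0ne
  have hid : z0 * p' = p z0 * ((1 + z0 * deriv (deriv f) z0 / deriv f z0) - p z0) := by
    rw [hp'E, hpz0f]
    field_simp
  have hBA : (1:ℂ) + z0 * deriv (deriv f) z0 / deriv f z0 = z0 * p' / p z0 + p z0 := by
    rw [hid]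
    field_simp [hpz0ne]
    ring
  have haC : (a:ℂ) ≠ 0 := Complex.ofReal_ne_zero.2 hane
  set y : ℝ := a + (1 - lam) * k * (1 + a^2) / (2*a) with hy_def
  have hRz0 : R z0 = (y:ℂ) * I := by
    rw [hR z0, ← hpz0f, hBA, hzp', hpz0, hy_def]
    push_cast
    field_simp [haC, Complex.I_ne_zero]
    linear_combination (((k:ℝ):ℂ)*(((lam:ℝ):ℂ)-1)*(1+(a:ℂ)^2)) * Complex.I_sq
  -- final inequality
  have hμ : 0 < 1 - lam := by linarith [hlam.2]
  have hC0 : 0 ≤ C := by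
    rw [hC]
    positivity
  have hCsq : C^2 = (1-lam)^2 + 2*(1-lam) := by
    rw [hC, mul_pow, Real.sq_sqrt (by positivity)]
    field_simp
  have habs : C ≤ |y| := by
    rcases lt_or_gt_of_ne hane with hneg | hpos'
    · have h1 : -y = (-a) + (1-lam)*k*(1+(-a)^2)/(2*(-a)) := by rw [hy_def]; ring
      have h2 : C ≤ -y := by
        rw [h1]
        exact slit_bound hμ hk1 (by linarith) hC0 hCsq
      linarith [neg_le_abs y]
    · have h2 : C ≤ y := by
        rw [hy_def]
        exact slit_bound hμ hk1 hpos' hC0 hCsq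
      linarith [le_abs_self y]
  exact hslit z0 hz0b hz0ne y habs hRz0
end

section
/- Let f be analytic on the open unit disk 𝔻 with f(0) = 0, f′(0) = 1, f(z) ≠ 0 for all z ∈ 𝔻 \ {0}, and f′(z) ≠ 0 for all z ∈ 𝔻. If for every z ∈ 𝔻 the value 1 + z f″(z)/f′(z) does not belong to the set {iy : y ∈ ℝ, |y| ≥ √3}, then Re(z f′(z)/f(z)) > 0 for all z ∈ 𝔻. -/
open Complex Metric


lemma sqrt3_bound (a σ : ℝ) (ha : a ≠ 0) (hσ : 0 ≤ σ) :
    Real.sqrt 3 ≤ |a + (1 + σ) * (1 + a ^ 2) / (2 * a)| := by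
  have h3 : Real.sqrt 3 ^ 2 = 3 := Real.sq_sqrt (by norm_num)
  have hs : 0 ≤ Real.sqrt 3 := Real.sqrt_nonneg 3
  rcases lt_or_gt_of_ne ha with h | h
  · have hq : (1 + σ) * (1 + a ^ 2) / (2 * a) = (1 + σ) * (1 + a ^ 2) * (2 * a)⁻¹ :=
      div_eq_mul_inv _ _
    have h2a : (2 * a)⁻¹ < 0 := inv_lt_zero.2 (by nlinarith)
    have hprod : (1 + σ) * (1 + a ^ 2) * (2 * a)⁻¹ * (2 * a) = (1 + σ) * (1 + a ^ 2) := by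
      field_simp
    rw [_root_.abs_of_nonpos (by nlinarith)]
    -- goal: √3 ≤ -(a + ...)
    rw [hq]
    nlinarith [sq_nonneg (Real.sqrt 3 * a + 1), sq_nonneg a, mul_pos (neg_pos.2 h2a) (neg_pos.2 (by nlinarith : 2*a < 0))]
  · have hq : (1 + σ) * (1 + a ^ 2) / (2 * a) = (1 + σ) * (1 + a ^ 2) * (2 * a)⁻¹ :=
      div_eq_mul_inv _ _
    have h2a : 0 < (2 * a)⁻¹ := inv_pos.2 (by nlinarith)
    have hprod : (1 + σ) * (1 + a ^ 2) * (2 * a)⁻¹ * (2 * a) = (1 + σ) * (1 + a ^ 2) := by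
      field_simp
    rw [_root_.abs_of_nonneg (by rw [hq]; nlinarith)]
    rw [hq]
    nlinarith [sq_nonneg (Real.sqrt 3 * a - 1), sq_nonneg a]


lemma key_alg (a σ : ℝ) (W D w0' z0 : ℂ) (ha : a ≠ 0)
    (hW : (1 + (a:ℂ) * I) * W = 1 - (a:ℂ) * I)
    (h1W : 1 + W ≠ 0)
    (hw0' : z0 * w0' = (1 + (σ:ℂ)) * W)
    (hD : D = (-w0' * (1 + W) - (1 - W) * w0') / (1 + W) ^ 2) :
    (a:ℂ) * I + z0 * D / ((a:ℂ) * I) =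
      ((a + (1 + σ) * (1 + a ^ 2) / (2 * a) : ℝ) : ℂ) * I := by
  have hna : (1:ℂ) + (a:ℂ) * I ≠ 0 := by
    intro h
    have := congrArg Complex.re h
    simp at this
  have haC : (a:ℂ) ≠ 0 := ofReal_ne_zero.2 ha
  have hWval : W = (1 - (a:ℂ) * I) / (1 + (a:ℂ) * I) := by
    field_simp
    linear_combination hW
  have hzD1 : z0 * D = -2 * (z0 * w0') / (1 + W) ^ 2 := by rw [hD]; ring
  have hzD : z0 * D = -(1 + (σ:ℂ)) * (1 + (a:ℂ) ^ 2) / 2 := by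
    rw [hzD1, hw0', hWval]
    have h2 : 1 + (1 - (a:ℂ) * I) / (1 + (a:ℂ) * I) ≠ 0 := by
      rw [← hWval]; exact h1W
    field_simp
    ring_nf
    linear_combination (4 * (a:ℂ) ^ 2 * (1 + (σ:ℂ)) * (1 + (a:ℂ) * I) - 4 * (a:ℂ) ^ 3 * I * (1 + (σ:ℂ))) * Complex.I_sq
  rw [hzD]
  push_cast
  field_simp
  ring_nf
  linear_combination (-2 * (a:ℂ) * (1 + (σ:ℂ)) * (1 + (a:ℂ) ^ 2) + (1 + (σ:ℂ)) * (2 * (a:ℂ) - (a:ℂ) ^ 2 + 2 * (a:ℂ) ^ 3 - 1)) * Complex.I_sq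


lemma comp_normSq_deriv (g : ℂ → ℂ) (d : ℂ) (γ : ℝ → ℂ) (γ' : ℂ) (t : ℝ) (z0 : ℂ)
    (hd : HasDerivAt g d z0) (hγ : HasDerivAt γ γ' t) (hγt : γ t = z0) :
    HasDerivAt (fun s => Complex.normSq (g (γ s)))
      (2 * ((g z0).re * (γ' * d).re + (g z0).im * (γ' * d).im)) t := by
  have hc : HasDerivAt (fun s => g (γ s)) (γ' * d) t := by
    have h1 := (hd.hasFDerivAt.restrictScalars ℝ)
    rw [← hγt] at h1
    have := h1.comp_hasDerivAt t hγ
    simpa [smul_eq_mul, mul_comm, Function.comp_def] using this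
  have hre : HasDerivAt (fun s => (g (γ s)).re) ((γ' * d).re) t := by
    simpa [Function.comp_def] using (Complex.reCLM.hasFDerivAt.comp_hasDerivAt t hc)
  have him : HasDerivAt (fun s => (g (γ s)).im) ((γ' * d).im) t := by
    simpa [Function.comp_def] using (Complex.imCLM.hasFDerivAt.comp_hasDerivAt t hc)
  have := (hre.mul hre).add (him.mul him)
  have heq : (fun s => Complex.normSq (g (γ s))) =
      fun s => (g (γ s)).re * (g (γ s)).re + (g (γ s)).im * (g (γ s)).im := by
    funext s; rw [Complex.normSq_apply]
  rw [heq]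
  refine this.congr_deriv ?_
  rw [hγt]
  ring

lemma boundary_deriv (g : ℂ → ℂ) (z0 d : ℂ) (hz0 : z0 ≠ 0)
    (hd : HasDerivAt g d z0)
    (hmax : ∀ z ∈ closedBall (0:ℂ) ‖z0‖, Complex.normSq (g z) ≤ Complex.normSq (g z0))
    (hgne : g z0 ≠ 0) :
    ∃ σ : ℝ, 0 ≤ σ ∧ z0 * d = (σ:ℂ) * g z0 := by
  set G := g z0 with hG
  -- tangential direction
  have h1 : HasDerivAt (fun t : ℝ => (t : ℂ)) 1 0 := by
    simpa using (hasDerivAt_id _).ofReal_comp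
  have h2 : HasDerivAt (fun t : ℝ => (t : ℂ) * I) I 0 := by simpa using h1.mul_const I
  have hγd : HasDerivAt (fun t : ℝ => z0 * Complex.exp ((t : ℂ) * I)) (z0 * I) 0 := by
    have h3 := h2.cexp
    have h4 := h3.const_mul z0
    simpa using h4
  have hγ0 : z0 * Complex.exp (((0:ℝ) : ℂ) * I) = z0 := by norm_num
  have hu := comp_normSq_deriv g d _ _ 0 z0 hd hγd hγ0
  have humax : IsLocalMax (fun s : ℝ => Complex.normSq (g (z0 * Complex.exp ((s : ℂ) * I)))) 0 := by
    apply Filter.Eventually.of_forall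
    intro t
    simp only [hγ0]
    apply hmax
    simp [mem_closedBall, Complex.norm_exp]
  have htan := humax.hasDerivAt_eq_zero hu
  -- radial direction
  have h1' : HasDerivAt (fun t : ℝ => (t : ℂ)) 1 1 := by
    simpa using (hasDerivAt_id _).ofReal_comp
  have hγd' : HasDerivAt (fun t : ℝ => (t : ℂ) * z0) z0 1 := by simpa using h1'.mul_const z0
  have hγ1 : ((1:ℝ) : ℂ) * z0 = z0 := by norm_num
  have hv := comp_normSq_deriv g d _ _ 1 z0 hd hγd' hγ1
  have hvle : ∀ s ∈ Set.Icc (0:ℝ) 1, Complex.normSq (g ((s : ℂ) * z0)) ≤ Complex.normSq G := by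
    intro s hs
    apply hmax
    simp only [mem_closedBall, dist_zero_right, norm_mul, Complex.norm_real]
    rw [Real.norm_eq_abs, _root_.abs_of_nonneg hs.1]
    nlinarith [norm_nonneg z0, hs.2]
  have hV : 0 ≤ 2 * (G.re * (z0 * d).re + G.im * (z0 * d).im) := by
    have ht := hasDerivAt_iff_tendsto_slope.mp hv
    have ht2 : Filter.Tendsto (slope (fun s : ℝ => Complex.normSq (g ((s : ℂ) * z0))) 1)
        (nhdsWithin 1 (Set.Iio 1)) (nhds (2 * (G.re * (z0 * d).re + G.im * (z0 * d).im))) :=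
      ht.mono_left (nhdsWithin_mono _ fun x hx => ne_of_lt hx)
    refine ge_of_tendsto ht2 ?_
    filter_upwards [Ioo_mem_nhdsLT_of_mem (Set.mem_Ioc.2 ⟨zero_lt_one, le_rfl⟩)] with s hs
    have hle := hvle s ⟨hs.1.le, hs.2.le⟩
    rw [slope_def_field]
    have h9 : ((1:ℝ):ℂ) * z0 = z0 := by norm_num
    simp only [h9]
    apply div_nonneg_of_nonpos
    · simpa using sub_nonpos.2 hle
    · linarith [hs.2]
  -- combine
  set c := (z0 * d) * (starRingEnd ℂ) G with hc
  have hcim : c.im = 0 := by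
    simp only [hc, Complex.mul_im, Complex.mul_re, Complex.conj_re, Complex.conj_im,
      Complex.I_re, Complex.I_im] at htan ⊢
    linear_combination (-1/2 : ℝ) * htan
  have hcre : 0 ≤ c.re := by
    simp only [hc, Complex.mul_re, Complex.mul_im, Complex.conj_re, Complex.conj_im] at hV ⊢
    nlinarith [hV]
  refine ⟨c.re / Complex.normSq G, div_nonneg hcre (Complex.normSq_nonneg G), ?_⟩
  have hns : Complex.normSq G ≠ 0 := (Complex.normSq_pos.2 hgne).ne'
  have hnsC : ((Complex.normSq G : ℝ) : ℂ) ≠ 0 := by exact_mod_cast hns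
  have hcC : ((c.re : ℝ) : ℂ) = c := by
    apply Complex.ext <;> simp [hcim]
  have hGG : G * (starRingEnd ℂ) G = ((Complex.normSq G : ℝ) : ℂ) := Complex.mul_conj G
  push_cast
  rw [div_mul_eq_mul_div, eq_div_iff hnsC, ← hGG]
  rw [hcC]
  rw [hc]
  ring

lemma jack (p : ℂ → ℂ) (hp : DifferentiableOn ℂ p (ball 0 1)) (hp0 : p 0 = 1)
    (hpne : ∀ z ∈ ball (0:ℂ) 1, p z ≠ 0)
    (hkey : ∀ z ∈ ball (0:ℂ) 1, (p z).re = 0 → ∀ y : ℝ, Real.sqrt 3 ≤ |y| →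
      p z + z * deriv p z / p z ≠ (y:ℂ) * I) :
    ∀ z ∈ ball (0:ℂ) 1, 0 < (p z).re := by
  by_contra hcon
  push_neg at hcon
  obtain ⟨z1, hz1mem, hz1le⟩ := hcon
  have pc : ContinuousOn (fun z => (p z).re) (ball (0:ℂ) 1) :=
    Complex.continuous_re.comp_continuousOn hp.continuousOn
  have hz1n : ‖z1‖ < 1 := mem_ball_zero_iff.1 hz1mem
  set ρ := ‖z1‖ with hρ
  have hsub : closedBall (0:ℂ) ρ ⊆ ball 0 1 := closedBall_subset_ball hz1n
  -- IVT : find a zero of Re p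
  have h0m : (0:ℂ) ∈ closedBall (0:ℂ) ρ := by simp [mem_closedBall, hρ]
  have hz1m : z1 ∈ closedBall (0:ℂ) ρ := by simp [mem_closedBall, hρ]
  have hIVT := ((convex_closedBall (0:ℂ) ρ).isPreconnected).intermediate_value hz1m h0m
    (pc.mono hsub)
  obtain ⟨zc, hzcmem, hzc⟩ := hIVT (a := 0) (by constructor <;> simp [hp0, hz1le])
  -- the compact set of zeros of Re p
  set E := closedBall (0:ℂ) ρ ∩ (fun z => (p z).re) ⁻¹' {0} with hE
  have hEclosed : IsClosed E :=
    (pc.mono hsub).preimage_isClosed_of_isClosed Metric.isClosed_closedBall isClosed_singleton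
  have hEcomp : IsCompact E := Metric.isCompact_of_isClosed_isBounded hEclosed
    (Metric.isBounded_closedBall.subset Set.inter_subset_left)
  have hEne : E.Nonempty := ⟨zc, hzcmem, hzc⟩
  obtain ⟨z0, hz0E, hz0min⟩ := hEcomp.exists_isMinOn hEne continuous_norm.continuousOn
  have hz0ball : z0 ∈ ball (0:ℂ) 1 := hsub hz0E.1
  have hpz0re : (p z0).re = 0 := hz0E.2
  have hz0ne : z0 ≠ 0 := by
    rintro rfl
    rw [hp0] at hpz0re
    simp at hpz0re
  set r0 := ‖z0‖ with hr0
  have hr0pos : 0 < r0 := norm_pos_iff.2 hz0ne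
  have hr0lt : r0 < 1 := lt_of_le_of_lt (mem_closedBall_zero_iff.1 hz0E.1) hz1n
  -- interior positivity
  have hint : ∀ z : ℂ, ‖z‖ < r0 → 0 < (p z).re := by
    intro z hz
    by_contra hcon2
    push_neg at hcon2
    have hzb : closedBall (0:ℂ) ‖z‖ ⊆ ball 0 1 :=
      closedBall_subset_ball (hz.trans hr0lt)
    have h0m' : (0:ℂ) ∈ closedBall (0:ℂ) ‖z‖ := by simp
    have hzm' : z ∈ closedBall (0:ℂ) ‖z‖ := by simp
    have hIVT2 := ((convex_closedBall (0:ℂ) ‖z‖).isPreconnected).intermediate_value hzm' h0m'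
      (pc.mono hzb)
    obtain ⟨zc', hzc'mem, hzc'⟩ := hIVT2 (a := 0) (by constructor <;> simp [hp0, hcon2])
    have hzc'E : zc' ∈ E := by
      refine ⟨?_, hzc'⟩
      have := mem_closedBall_zero_iff.1 hzc'mem
      exact mem_closedBall_zero_iff.2 (le_trans this (le_trans hz.le (mem_closedBall_zero_iff.1 hz0E.1)))
    have := hz0min hzc'E
    simp only [Set.mem_setOf_eq] at this
    have h2 := mem_closedBall_zero_iff.1 hzc'mem
    have : r0 ≤ ‖zc'‖ := this
    linarith
  -- nonneg on closed ball
  have hge : ∀ z ∈ closedBall (0:ℂ) r0, 0 ≤ (p z).re := by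
    intro z hz
    rcases lt_or_eq_of_le (mem_closedBall_zero_iff.1 hz) with h | h
    · exact (hint z h).le
    · have hzball : z ∈ ball (0:ℂ) 1 := by
        rw [mem_ball_zero_iff, h]; exact hr0lt
      have hcat : ContinuousAt (fun w => (p w).re) z :=
        (pc z hzball).continuousAt (isOpen_ball.mem_nhds hzball)
      have htend : Filter.Tendsto (fun t : ℝ => (p ((t:ℂ) * z)).re)
          (nhdsWithin 1 (Set.Iio 1)) (nhds ((p z).re)) := by
        have h1 : Filter.Tendsto (fun t : ℝ => (t:ℂ) * z) (nhdsWithin 1 (Set.Iio 1)) (nhds z) := by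
          have hco : Continuous (fun t : ℝ => (t:ℂ) * z) :=
            Complex.continuous_ofReal.mul continuous_const
          have := (hco.tendsto 1).mono_left (nhdsWithin_le_nhds (s := Set.Iio (1:ℝ)))
          simpa using this
        exact hcat.tendsto.comp h1
      refine ge_of_tendsto htend ?_
      filter_upwards [Ioo_mem_nhdsLT_of_mem (Set.mem_Ioc.2 ⟨zero_lt_one, le_rfl⟩)] with t ht
      refine (hint _ ?_).le
      rw [norm_mul, Complex.norm_real, Real.norm_eq_abs, _root_.abs_of_nonneg ht.1.le, ← h]
      nlinarith [ht.1, ht.2, norm_nonneg z, h ▸ hr0pos]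
  -- the open set U where Re p > -1
  set U : Set ℂ := ball (0:ℂ) 1 ∩ (fun z => (p z).re) ⁻¹' (Set.Ioi (-1)) with hU
  have hUopen : IsOpen U := pc.isOpen_inter_preimage isOpen_ball isOpen_Ioi
  have h0U : (0:ℂ) ∈ U := by
    refine ⟨by simp, ?_⟩
    simp only [Set.mem_preimage, Set.mem_Ioi, hp0, Complex.one_re]
    norm_num
  have hcbU : closedBall (0:ℂ) r0 ⊆ U := by
    intro z hz
    refine ⟨mem_ball_zero_iff.2 (lt_of_le_of_lt (mem_closedBall_zero_iff.1 hz) hr0lt), ?_⟩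
    have := hge z hz
    simp only [Set.mem_preimage, Set.mem_Ioi]
    linarith
  have hz0U : z0 ∈ U := hcbU (mem_closedBall_zero_iff.2 le_rfl)
  have h1p : ∀ z ∈ U, 1 + p z ≠ 0 := by
    intro z hz h
    have h2 : ((1:ℂ) + p z).re = 0 := by rw [h]; simp
    simp only [Complex.add_re, Complex.one_re] at h2
    have h3 := hz.2
    simp only [Set.mem_preimage, Set.mem_Ioi] at h3
    linarith
  set w : ℂ → ℂ := fun z => (1 - p z) / (1 + p z) with hwdef
  have hwdiff : DifferentiableOn ℂ w U :=
    ((differentiableOn_const 1).sub (hp.mono fun z hz => hz.1)).div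
      ((differentiableOn_const 1).add (hp.mono fun z hz => hz.1)) h1p
  have hw0 : w 0 = 0 := by simp [hwdef, hp0]
  set g : ℂ → ℂ := dslope w 0 with hgdef
  have hgdiff : DifferentiableOn ℂ g U :=
    (differentiableOn_dslope (hUopen.mem_nhds h0U)).2 hwdiff
  have hwzg : ∀ z : ℂ, z ≠ 0 → w z = z * g z := by
    intro z hz
    rw [hgdef, dslope_of_ne _ hz, slope_def_field, hw0]
    field_simp
    ring
  -- |w| ≤ 1 on closed ball
  have hwle : ∀ z ∈ closedBall (0:ℂ) r0, ‖w z‖ ≤ 1 := by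
    intro z hz
    have hzU := hcbU hz
    have h2 := hge z hz
    have h3 : Complex.normSq (1 - p z) ≤ Complex.normSq (1 + p z) := by
      simp only [Complex.normSq_apply, Complex.sub_re, Complex.add_re, Complex.sub_im,
        Complex.add_im, Complex.one_re, Complex.one_im]
      nlinarith
    have h4 : ‖(1:ℂ) - p z‖ ≤ ‖(1:ℂ) + p z‖ := by
      rw [Complex.norm_def, Complex.norm_def]
      exact Real.sqrt_le_sqrt h3
    simp only [hwdef]
    rw [norm_div]
    exact div_le_one_of_le₀ h4 (norm_nonneg _)
  -- |g| ≤ 1/r0 on the sphere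
  have hgsph : ∀ z : ℂ, ‖z‖ = r0 → ‖g z‖ ≤ 1 / r0 := by
    intro z hz
    have hzne : z ≠ 0 := by
      intro h
      rw [h] at hz
      simp at hz
      exact hr0pos.ne hz
    have h2 := hwle z (mem_closedBall_zero_iff.2 hz.le)
    rw [hwzg z hzne, norm_mul, hz] at h2
    rw [le_div_iff₀ hr0pos]
    linarith [h2, mul_comm r0 ‖g z‖]
  -- maximum modulus
  have hmaxmod : ∀ z ∈ closedBall (0:ℂ) r0, ‖g z‖ ≤ 1 / r0 := by
    intro z hz
    have hcl : closure (ball (0:ℂ) r0) = closedBall 0 r0 := closure_ball 0 hr0pos.ne'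
    apply Complex.norm_le_of_forall_mem_frontier_norm_le isBounded_ball
    · apply DifferentiableOn.diffContOnCl
      rw [hcl]
      exact hgdiff.mono hcbU
    · intro x hx
      rw [frontier_ball 0 hr0pos.ne'] at hx
      exact hgsph _ (mem_sphere_zero_iff_norm.1 hx)
    · rw [hcl]; exact hz
  -- |w z0| = 1 and |g z0| = 1/r0
  have h1pz0 := h1p z0 hz0U
  have hwz0norm : ‖w z0‖ = 1 := by
    have h1 : Complex.normSq (1 - p z0) = Complex.normSq (1 + p z0) := by
      simp only [Complex.normSq_apply, Complex.sub_re, Complex.add_re, Complex.sub_im,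
        Complex.add_im, Complex.one_re, Complex.one_im, hpz0re]
      ring
    have h4 : ‖(1:ℂ) - p z0‖ = ‖(1:ℂ) + p z0‖ := by
      rw [Complex.norm_def, Complex.norm_def, h1]
    simp only [hwdef]
    rw [norm_div, h4]
    exact div_self (norm_ne_zero_iff.2 h1pz0)
  have hgz0norm : ‖g z0‖ = 1 / r0 := by
    have h2 := hwz0norm
    rw [hwzg z0 hz0ne, norm_mul] at h2
    field_simp
    linear_combination h2
  have hgz0ne : g z0 ≠ 0 := by
    intro h
    rw [h] at hgz0norm
    simp at hgz0norm
    exact hr0pos.ne' hgz0norm.symm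
  -- normSq max at z0
  have hmaxSq : ∀ z ∈ closedBall (0:ℂ) ‖z0‖, Complex.normSq (g z) ≤ Complex.normSq (g z0) := by
    intro z hz
    rw [Complex.normSq_eq_norm_sq, Complex.normSq_eq_norm_sq,
      hgz0norm]
    have := hmaxmod z hz
    nlinarith [norm_nonneg (g z)]
  -- boundary derivative
  have hdAt : HasDerivAt g (deriv g z0) z0 :=
    ((hgdiff z0 hz0U).differentiableAt (hUopen.mem_nhds hz0U)).hasDerivAt
  obtain ⟨σ, hσ0, hσ⟩ := boundary_deriv g z0 (deriv g z0) hz0ne hdAt hmaxSq hgz0ne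
  -- derivative of w at z0
  have hwd : HasDerivAt w (g z0 + z0 * deriv g z0) z0 := by
    have h1 : HasDerivAt (fun z : ℂ => z * g z) (1 * g z0 + z0 * deriv g z0) z0 :=
      (hasDerivAt_id z0).mul hdAt
    rw [one_mul] at h1
    apply h1.congr_of_eventuallyEq
    filter_upwards [isOpen_ne.mem_nhds hz0ne] with z hz
    exact hwzg z hz
  -- p = (1-w)/(1+w) on U
  have h1w : ∀ z ∈ U, 1 + w z ≠ 0 := by
    intro z hz
    have h2 := h1p z hz
    have h3 : 1 + w z = 2 / (1 + p z) := by
      simp only [hwdef]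
      field_simp
      ring
    rw [h3]
    exact div_ne_zero two_ne_zero h2
  have hpw : ∀ z ∈ U, p z = (1 - w z) / (1 + w z) := by
    intro z hz
    have h2 := h1p z hz
    have h3 := h1w z hz
    rw [eq_div_iff h3]
    simp only [hwdef] at *
    field_simp
    ring
  -- derivative of p at z0
  set w0' := g z0 + z0 * deriv g z0 with hw0'def
  set D := (-w0' * (1 + w z0) - (1 - w z0) * w0') / (1 + w z0) ^ 2 with hDdef
  have hpd : HasDerivAt p D z0 := by
    have h1 := ((hasDerivAt_const z0 (1:ℂ)).sub hwd).div
      ((hasDerivAt_const z0 (1:ℂ)).add hwd) (h1w z0 hz0U)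
    have h2 : HasDerivAt (fun z => (1 - w z) / (1 + w z)) D z0 := by
      refine h1.congr_deriv ?_
      rw [hDdef]
      simp only [Pi.add_apply, Pi.sub_apply]
      ring
    apply h2.congr_of_eventuallyEq
    filter_upwards [hUopen.mem_nhds hz0U] with z hz
    exact hpw z hz
  have hderivp : deriv p z0 = D := hpd.deriv
  -- final algebra
  set a := (p z0).im with hadef
  have hpz0eq : p z0 = (a:ℂ) * I := by
    apply Complex.ext <;> simp [hpz0re, hadef]
  have ha : a ≠ 0 := by
    intro h
    apply hpne z0 hz0ball
    rw [hpz0eq, h]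
    simp
  have hWrel : (1 + (a:ℂ) * I) * w z0 = 1 - (a:ℂ) * I := by
    have h2 := h1pz0
    rw [hpz0eq] at h2
    simp only [hwdef]
    rw [hpz0eq]
    field_simp
  have hw0'rel : z0 * w0' = (1 + (σ:ℂ)) * w z0 := by
    rw [hwzg z0 hz0ne, hw0'def]
    linear_combination z0 * hσ
  have halg := key_alg a σ (w z0) D w0' z0 ha hWrel (h1w z0 hz0U) hw0'rel hDdef
  have hfin := hkey z0 hz0ball hpz0re (a + (1 + σ) * (1 + a ^ 2) / (2 * a))
    (sqrt3_bound a σ ha hσ0)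
  apply hfin
  rw [hpz0eq, hderivp]
  exact halg

theorem stmt_2 (f : ℂ → ℂ) (hanal : DifferentiableOn ℂ f (ball (0 : ℂ) 1))
    (hf0 : f 0 = 0) (hf'0 : deriv f 0 = 1)
    (hfne : ∀ z ∈ ball (0 : ℂ) 1, z ≠ 0 → f z ≠ 0)
    (hf'ne : ∀ z ∈ ball (0 : ℂ) 1, deriv f z ≠ 0)
    (hslit : ∀ z ∈ ball (0 : ℂ) 1, ∀ y : ℝ, Real.sqrt 3 ≤ |y| →
      1 + z * deriv (deriv f) z / deriv f z ≠ y * I) :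
    ∀ z ∈ ball (0 : ℂ) 1, z ≠ 0 → 0 < (z * deriv f z / f z).re := by
  have hopen : IsOpen (ball (0:ℂ) 1) := isOpen_ball
  have hA : AnalyticOnNhd ℂ f (ball 0 1) := hanal.analyticOnNhd hopen
  have hAd : AnalyticOnNhd ℂ (deriv f) (ball 0 1) := hA.deriv
  have h0b : (0:ℂ) ∈ ball (0:ℂ) 1 := by simp
  have hqdiff : DifferentiableOn ℂ (dslope f 0) (ball 0 1) :=
    (differentiableOn_dslope (hopen.mem_nhds h0b)).2 hanal
  have hq0 : dslope f 0 0 = 1 := by rw [dslope_same]; exact hf'0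
  have hqz : ∀ z : ℂ, z ≠ 0 → dslope f 0 z = f z / z := by
    intro z hz
    rw [dslope_of_ne _ hz, slope_def_field, hf0]
    simp
  have hqne : ∀ z ∈ ball (0:ℂ) 1, dslope f 0 z ≠ 0 := by
    intro z hz
    rcases eq_or_ne z 0 with rfl | hzne
    · rw [hq0]; exact one_ne_zero
    · rw [hqz z hzne]
      exact div_ne_zero (hfne z hz hzne) hzne
  set p : ℂ → ℂ := fun z => deriv f z / dslope f 0 z with hpdef
  have hpdiff : DifferentiableOn ℂ p (ball 0 1) :=
    (hAd.differentiableOn).div hqdiff hqne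
  have hp0 : p 0 = 1 := by simp [hpdef, hq0, hf'0]
  have hpne : ∀ z ∈ ball (0:ℂ) 1, p z ≠ 0 := fun z hz =>
    div_ne_zero (hf'ne z hz) (hqne z hz)
  have hpz : ∀ z ∈ ball (0:ℂ) 1, z ≠ 0 → p z = z * deriv f z / f z := by
    intro z hz hzne
    simp only [hpdef]
    rw [hqz z hzne]
    rw [div_div_eq_mul_div, mul_comm]
  have hkey : ∀ z ∈ ball (0:ℂ) 1, (p z).re = 0 → ∀ y : ℝ, Real.sqrt 3 ≤ |y| →
      p z + z * deriv p z / p z ≠ (y:ℂ) * I := by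
    intro z hz hre y hy heq
    have hzne : z ≠ 0 := by
      rintro rfl
      rw [hp0] at hre
      simp at hre
    have hfz := hfne z hz hzne
    have hf'z := hf'ne z hz
    have hfat : HasDerivAt f (deriv f z) z :=
      (hanal.differentiableAt (hopen.mem_nhds hz)).hasDerivAt
    have hf''at : HasDerivAt (deriv f) (deriv (deriv f) z) z :=
      (hAd z hz).differentiableAt.hasDerivAt
    have hmul : HasDerivAt (fun ζ => ζ * deriv f ζ) (1 * deriv f z + z * deriv (deriv f) z) z :=
      (hasDerivAt_id z).mul hf''at
    have hdiv : HasDerivAt (fun ζ => ζ * deriv f ζ / f ζ)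
        (((1 * deriv f z + z * deriv (deriv f) z) * f z - z * deriv f z * deriv f z) / f z ^ 2)
        z := hmul.div hfat hfz
    have hpat : HasDerivAt p
        (((1 * deriv f z + z * deriv (deriv f) z) * f z - z * deriv f z * deriv f z) / f z ^ 2)
        z := by
      apply hdiv.congr_of_eventuallyEq
      filter_upwards [(hopen.inter isOpen_ne).mem_nhds ⟨hz, hzne⟩] with ζ hζ
      exact hpz ζ hζ.1 hζ.2
    apply hslit z hz y hy
    have hid : p z + z * deriv p z / p z = 1 + z * deriv (deriv f) z / deriv f z := by
      rw [hpat.deriv, hpz z hz hzne]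
      field_simp
      ring
    rw [← hid]
    exact heq
  intro z hz hzne
  have := jack p hpdiff hp0 hpne hkey z hz
  rwa [hpz z hz hzne] at this
end

section
/- Let λ ∈ [0, π/2) and let h be analytic on the open unit disk 𝔻 with h(0) = 1 and h(z) ≠ 0 for all z ∈ 𝔻. Suppose that for every z ∈ 𝔻 and every real number A with |A| ≥ sec λ · √(1 + 2 cos λ) − tan λ one has e^{−iλ} h(z) + z h′(z)/h(z) ≠ iA. Then Re(e^{−iλ} h(z)) > 0 for all z ∈ 𝔻. -/
open Complex Metric Set Filter Topology

lemma hasDerivAt_normSq_comp {F : ℝ → ℂ} {F' : ℂ} {t : ℝ} (hF : HasDerivAt F F' t) :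
    HasDerivAt (fun s => Complex.normSq (F s)) (2 * ((starRingEnd ℂ) (F t) * F').re) t := by
  have hre : HasDerivAt (fun s => (F s).re) F'.re t :=
    Complex.reCLM.hasFDerivAt.comp_hasDerivAt t hF
  have him : HasDerivAt (fun s => (F s).im) F'.im t :=
    Complex.imCLM.hasFDerivAt.comp_hasDerivAt t hF
  have h2 := (hre.mul hre).add (him.mul him)
  have heq : (fun s => Complex.normSq (F s))
      = fun s => (F s).re * (F s).re + (F s).im * (F s).im := by
    funext s; exact Complex.normSq_apply _
  rw [heq]
  refine HasDerivAt.congr_deriv h2 ?_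
  simp [Complex.mul_re]; ring

lemma slope_ge {g : ℝ → ℝ} {D : ℝ} (hg : HasDerivAt g D 1) (h1 : g 1 = 1)
    (hle : ∀ t ∈ Set.Ioo (0:ℝ) 1, g t ≤ t^2) : 2 ≤ D := by
  have hs := (hg.hasDerivWithinAt (s := Set.Iio (1:ℝ)))
  rw [hasDerivWithinAt_iff_tendsto_slope] at hs
  have hdiff : (Set.Iio (1:ℝ)) \ {1} = Set.Iio 1 := by
    rw [Set.diff_singleton_eq_self]; simp
  rw [hdiff] at hs
  have hev : ∀ᶠ t in 𝓝[<] (1:ℝ), 1 + t ≤ slope g 1 t := by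
    filter_upwards [Ioo_mem_nhdsLT_of_mem (by norm_num : (1:ℝ) ∈ Set.Ioc (0:ℝ) 1)] with t ht
    have h1t : t - 1 < 0 := by linarith [ht.2]
    have hgt : g t ≤ t^2 := hle t ht
    rw [slope_def_field]
    rw [le_div_iff_of_neg h1t]
    nlinarith
  have htend : Tendsto (fun t : ℝ => 1 + t) (𝓝[<] (1:ℝ)) (𝓝 2) := by
    have h : Tendsto (fun t : ℝ => 1 + t) (𝓝 (1:ℝ)) (𝓝 (1 + 1)) :=
      (continuous_const.add continuous_id).tendsto (1:ℝ)
    norm_num at h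
    exact h.mono_left nhdsWithin_le_nhds
  exact le_of_tendsto_of_tendsto htend hs hev

lemma bound_aux {co si k N ρ : ℝ} (hcos : 0 < co) (hsin : 0 ≤ si)
    (hk : 1 ≤ k) (hN : N = 1 + 2*ρ*si + ρ^2) (hNpos : 0 < N) (hρ : ρ ≠ 0) :
    co⁻¹ * Real.sqrt (1 + 2*co) - si/co ≤ |ρ - (-(k*N)/(2*co))/ρ| := by
  set t : ℝ := Real.sqrt (1 + 2*co) with ht_def
  have ht2 : t^2 = 1 + 2*co := Real.sq_sqrt (by linarith)
  have ht0 : 0 ≤ t := Real.sqrt_nonneg _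
  have hkN : N ≤ k*N := le_mul_of_one_le_left hNpos.le hk
  rcases hρ.lt_or_gt with hneg | hpos
  · refine le_trans ?_ (neg_le_abs _)
    have expand : -(ρ - (-(k*N)/(2*co))/ρ) - (co⁻¹*t - si/co)
        = (2*co*ρ^2 + k*N + 2*ρ*t - 2*ρ*si)/(2*co*(-ρ)) := by
      field_simp
      ring
    have hden2 : 0 < 2*co*(-ρ) := by nlinarith
    have hnum : 0 ≤ 2*co*ρ^2 + k*N + 2*ρ*t - 2*ρ*si := by
      nlinarith [sq_nonneg (ρ*t + 1), hkN, ht2]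
    have := div_nonneg hnum hden2.le
    linarith [expand ▸ this]
  · refine le_trans ?_ (le_abs_self _)
    have expand : (ρ - (-(k*N)/(2*co))/ρ) - (co⁻¹*t - si/co)
        = (2*co*ρ^2 + k*N - 2*ρ*t + 2*ρ*si)/(2*co*ρ) := by
      field_simp
      ring
    have hden2 : 0 < 2*co*ρ := by nlinarith
    have hnum : 0 ≤ 2*co*ρ^2 + k*N - 2*ρ*t + 2*ρ*si := by
      nlinarith [sq_nonneg (ρ*t - 1), hkN, ht2, mul_nonneg hpos.le hsin]
    have := div_nonneg hnum hden2.le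
    linarith [expand ▸ this]

theorem stmt_3 (lam : ℝ) (hlam : lam ∈ Set.Ico (0 : ℝ) (Real.pi / 2))
    (h : ℂ → ℂ) (hanal : DifferentiableOn ℂ h (ball (0 : ℂ) 1))
    (h0 : h 0 = 1) (hne : ∀ z ∈ ball (0 : ℂ) 1, h z ≠ 0)
    (hslit : ∀ z ∈ ball (0 : ℂ) 1, ∀ A : ℝ,
      (Real.cos lam)⁻¹ * Real.sqrt (1 + 2 * Real.cos lam) - Real.tan lam ≤ |A| →
      Complex.exp (-(lam : ℂ) * I) * h z + z * deriv h z / h z ≠ A * I) :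
    ∀ z ∈ ball (0 : ℂ) 1, 0 < (Complex.exp (-(lam : ℂ) * I) * h z).re := by
  obtain ⟨hlam0, hlam2⟩ := hlam
  have hpi : 0 < Real.pi := Real.pi_pos
  have hcos : 0 < Real.cos lam := Real.cos_pos_of_mem_Ioo ⟨by linarith, hlam2⟩
  have hsin : 0 ≤ Real.sin lam := Real.sin_nonneg_of_nonneg_of_le_pi hlam0 (by linarith)
  set c : ℂ := Complex.exp (-(lam : ℂ) * I) with hc_def
  have hc_eq : c = Complex.cos lam - Complex.sin lam * I := by
    rw [hc_def, show -(lam:ℂ) * I = (-lam:ℂ) * I by ring, Complex.exp_mul_I,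
      Complex.cos_neg, Complex.sin_neg]; ring
  have hc_re : c.re = Real.cos lam := by
    rw [hc_eq]; simp [← Complex.ofReal_cos, ← Complex.ofReal_sin]
  have hc_im : c.im = -Real.sin lam := by
    rw [hc_eq]; simp [← Complex.ofReal_cos, ← Complex.ofReal_sin]
  have hc_ne : c ≠ 0 := Complex.exp_ne_zero _
  set p : ℂ → ℂ := fun z => c * h z with hp_def
  by_contra hcon
  push_neg at hcon
  obtain ⟨w, hw, hwre⟩ := hcon
  have hw1 : ‖w‖ < 1 := mem_ball_zero_iff.mp hw
  -- differentiability of p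
  have hpda : ∀ z ∈ ball (0:ℂ) 1, DifferentiableAt ℂ p z := by
    intro z hz
    exact (differentiableAt_const c).mul
      ((hanal z hz).differentiableAt (isOpen_ball.mem_nhds hz))
  have hpc : ContinuousOn p (closedBall (0:ℂ) ‖w‖) := by
    intro z hz
    have : z ∈ ball (0:ℂ) 1 := by
      rw [mem_closedBall_zero_iff] at hz; rw [mem_ball_zero_iff]; linarith
    exact ((hpda z this).continuousAt).continuousWithinAt
  -- the compact set T
  set T : Set ℂ := closedBall (0:ℂ) ‖w‖ ∩ {z | (p z).re ≤ 0} with hT_def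
  have hTne : T.Nonempty := ⟨w, by rw [mem_closedBall_zero_iff], hwre⟩
  have hTcl : IsClosed T := by
    have hclosed : IsClosed (closedBall (0:ℂ) ‖w‖) := Metric.isClosed_closedBall
    exact ContinuousOn.preimage_isClosed_of_isClosed
      (Complex.continuous_re.comp_continuousOn hpc) hclosed isClosed_Iic
  have hTcomp : IsCompact T :=
    (isCompact_closedBall (0:ℂ) ‖w‖).of_isClosed_subset hTcl inter_subset_left
  obtain ⟨z₀, hz₀T, hz₀min⟩ := hTcomp.exists_isMinOn hTne continuous_norm.continuousOn
  rw [isMinOn_iff] at hz₀min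
  set r : ℝ := ‖z₀‖ with hr_def
  have hr1 : r < 1 := lt_of_le_of_lt (mem_closedBall_zero_iff.mp hz₀T.1) hw1
  have hz₀ball : z₀ ∈ ball (0:ℂ) 1 := mem_ball_zero_iff.mpr hr1
  have hball_pos : ∀ z : ℂ, ‖z‖ < r → 0 < (p z).re := by
    intro z hz
    by_contra hzc
    push_neg at hzc
    have hzT : z ∈ T := ⟨by
      rw [mem_closedBall_zero_iff]
      exact le_trans hz.le (mem_closedBall_zero_iff.mp hz₀T.1), hzc⟩
    exact absurd (hz₀min z hzT) (not_le.mpr hz)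
  have hr0 : 0 < r := by
    rcases eq_or_lt_of_le (norm_nonneg z₀) with h0' | h0'
    · exfalso
      have hz00 : z₀ = 0 := by rwa [eq_comm, norm_eq_zero] at h0'
      have : (p 0).re = Real.cos lam := by
        simp [hp_def, h0, hc_re]
      have h2 : (p z₀).re ≤ 0 := hz₀T.2
      rw [hz00] at h2
      rw [this] at h2
      linarith
    · exact h0'
  -- nonnegativity on the closed ball of radius r
  have hRe_nonneg : ∀ z : ℂ, ‖z‖ ≤ r → 0 ≤ (p z).re := by
    intro z hz
    have hzb : z ∈ ball (0:ℂ) 1 := mem_ball_zero_iff.mpr (lt_of_le_of_lt hz hr1)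
    have hcont : ContinuousAt (fun t : ℝ => (p ((t:ℂ) * z)).re) 1 := by
      have h1 : ContinuousAt (fun t : ℝ => (t:ℂ) * z) 1 :=
        (Complex.continuous_ofReal.mul continuous_const).continuousAt
      have h2 : ContinuousAt p z := (hpda z hzb).continuousAt
      have h3 : ContinuousAt p (((1:ℝ):ℂ) * z) := by
        rw [show (((1:ℝ):ℂ) * z) = z by simp]; exact h2
      have h4 : ContinuousAt (p ∘ fun t : ℝ => (t:ℂ) * z) 1 := ContinuousAt.comp (g := p) h3 h1
      have h5 : ContinuousAt (Complex.re ∘ (p ∘ fun t : ℝ => (t:ℂ) * z)) 1 :=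
        ContinuousAt.comp Complex.continuous_re.continuousAt h4
      exact h5
    have htend : Tendsto (fun t : ℝ => (p ((t:ℂ) * z)).re) (𝓝[<] (1:ℝ)) (𝓝 ((p z).re)) := by
      have := hcont.tendsto
      simp only [one_mul, Complex.ofReal_one] at this
      exact this.mono_left nhdsWithin_le_nhds
    refine ge_of_tendsto htend ?_
    filter_upwards [Ioo_mem_nhdsLT_of_mem (by norm_num : (1:ℝ) ∈ Set.Ioc (0:ℝ) 1)] with t ht
    refine (hball_pos _ ?_).le
    rw [norm_mul, Complex.norm_real, Real.norm_eq_abs, abs_of_pos ht.1]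
    calc t * ‖z‖ ≤ t * r := by nlinarith [ht.1.le]
    _ < r := by nlinarith [ht.2]
  have hre0 : (p z₀).re = 0 := le_antisymm hz₀T.2 (hRe_nonneg z₀ le_rfl)
  set ρ : ℝ := (p z₀).im with hρ_def
  have hpz₀ : p z₀ = (ρ:ℂ) * I := by
    apply Complex.ext <;> simp [hre0, hρ_def]
  have hρ0 : ρ ≠ 0 := by
    intro h0'
    have : p z₀ = 0 := by rw [hpz₀, h0']; simp
    exact (mul_ne_zero hc_ne (hne z₀ hz₀ball)) this
  -- the quotient function q
  set d : ℂ := (starRingEnd ℂ) c + p z₀ with hd_def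
  have hden_re : ∀ z : ℂ, ‖z‖ ≤ r → 0 < ((starRingEnd ℂ) c + p z).re := by
    intro z hz
    have := hRe_nonneg z hz
    simp only [Complex.add_re, Complex.conj_re, hc_re]
    linarith
  have hden : ∀ z : ℂ, ‖z‖ ≤ r → (starRingEnd ℂ) c + p z ≠ 0 := by
    intro z hz h0'
    have := hden_re z hz
    rw [h0'] at this; simp at this
  have hd_ne : d ≠ 0 := hden z₀ le_rfl
  set q : ℂ → ℂ := fun z => (c - p z) / ((starRingEnd ℂ) c + p z) with hq_def
  have hkey : ∀ z : ℂ, Complex.normSq ((starRingEnd ℂ) c + p z) - Complex.normSq (c - p z)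
      = 4 * Real.cos lam * (p z).re := by
    intro z
    simp only [Complex.normSq_apply, Complex.add_re, Complex.add_im, Complex.sub_re,
      Complex.sub_im, Complex.conj_re, Complex.conj_im, hc_re, hc_im]
    ring
  have hq0 : q 0 = 0 := by
    have : p 0 = c := by simp [hp_def, h0]
    simp [hq_def, this]
  -- q is differentiable on ball r and at z₀
  have hqdiffAt : ∀ z : ℂ, ‖z‖ ≤ r → DifferentiableAt ℂ q z := by
    intro z hz
    have hzb : z ∈ ball (0:ℂ) 1 := mem_ball_zero_iff.mpr (lt_of_le_of_lt hz hr1)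
    exact ((differentiableAt_const c).sub (hpda z hzb)).div
      ((differentiableAt_const _).add (hpda z hzb)) (hden z hz)
  have hqdiffOn : DifferentiableOn ℂ q (ball (0:ℂ) r) := by
    intro z hz
    exact (hqdiffAt z (mem_ball_zero_iff.mp hz).le).differentiableWithinAt
  have hq_le_one : ∀ z : ℂ, ‖z‖ ≤ r → ‖q z‖ ≤ 1 := by
    intro z hz
    rw [hq_def]
    simp only [norm_div]
    rw [div_le_one (norm_pos_iff.mpr (hden z hz))]
    have h1 := hkey z
    have h2 := hRe_nonneg z hz
    have h3 : Complex.normSq (c - p z) ≤ Complex.normSq ((starRingEnd ℂ) c + p z) := by nlinarith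
    rw [← Complex.sq_norm, ← Complex.sq_norm] at h3
    exact (pow_le_pow_iff_left₀ (norm_nonneg _) (norm_nonneg _) two_ne_zero).mp h3
  have hmaps : MapsTo q (ball (0:ℂ) r) (ball (q 0) 1) := by
    intro z hz
    rw [hq0, mem_ball_zero_iff, hq_def]
    simp only [norm_div]
    rw [div_lt_one (norm_pos_iff.mpr (hden z (mem_ball_zero_iff.mp hz).le))]
    have h1 := hkey z
    have h2 := hball_pos z (mem_ball_zero_iff.mp hz)
    have h3 : Complex.normSq (c - p z) < Complex.normSq ((starRingEnd ℂ) c + p z) := by nlinarith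
    rw [← Complex.sq_norm, ← Complex.sq_norm] at h3
    exact lt_of_pow_lt_pow_left₀ 2 (norm_nonneg _) h3
  -- Schwarz estimate along the radius
  have hschwarz : ∀ t : ℝ, t ∈ Set.Ioo (0:ℝ) 1 → ‖q ((t:ℂ) * z₀)‖ ≤ t := by
    intro t ht
    have hmem : (t:ℂ) * z₀ ∈ ball (0:ℂ) r := by
      rw [mem_ball_zero_iff, norm_mul, Complex.norm_real, Real.norm_eq_abs, abs_of_pos ht.1]
      nlinarith [ht.2, hr0]
    have := Complex.dist_le_div_mul_dist_of_mapsTo_ball hqdiffOn (hmaps.mono_right ball_subset_closedBall) hmem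
    rw [dist_eq_norm, dist_eq_norm, hq0, sub_zero, sub_zero, norm_mul,
      Complex.norm_real, Real.norm_eq_abs, abs_of_pos ht.1] at this
    calc ‖q ((t:ℂ) * z₀)‖ ≤ 1 / r * (t * ‖z₀‖) := this
    _ = t := by rw [← hr_def]; field_simp
  -- |q z₀| = 1
  have hNq : Complex.normSq (q z₀) = 1 := by
    rw [hq_def]
    simp only [map_div₀]
    rw [div_eq_one_iff_eq (by simpa [Complex.normSq_eq_zero] using hd_ne)]
    have := hkey z₀
    rw [hre0] at this
    linarith
  -- derivative of q at z₀
  have hpz₀d : HasDerivAt p (deriv p z₀) z₀ := (hpda z₀ hz₀ball).hasDerivAt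
  set p' : ℂ := deriv p z₀ with hp'_def
  set q' : ℂ := -((c + (starRingEnd ℂ) c) * p') / d^2 with hq'_def
  have hqder : HasDerivAt q q' z₀ := by
    have h1 : HasDerivAt (fun z => c - p z) (0 - p') z₀ := (hasDerivAt_const z₀ c).sub hpz₀d
    have h2 : HasDerivAt (fun z => (starRingEnd ℂ) c + p z) (0 + p') z₀ :=
      (hasDerivAt_const z₀ ((starRingEnd ℂ) c)).add hpz₀d
    have h3 := h1.div h2 hd_ne
    refine HasDerivAt.congr_deriv h3 ?_
    rw [hq'_def, hd_def]
    field_simp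
    ring
  set K : ℂ := (starRingEnd ℂ) (q z₀) * (z₀ * q') with hK_def
  -- radial derivative: 1 ≤ K.re
  have hKre : 1 ≤ K.re := by
    have hof : HasDerivAt (fun t : ℝ => (t:ℂ) * z₀) z₀ 1 := by
      simpa using (Complex.ofRealCLM.hasDerivAt (x := (1:ℝ))).mul_const z₀
    have hg : HasDerivAt q q' (((1:ℝ):ℂ) * z₀) := by simpa using hqder
    have hF : HasDerivAt (fun t : ℝ => q ((t:ℂ) * z₀)) (z₀ • q') 1 := by have := hg.scomp 1 hof; exact this
    have hD := hasDerivAt_normSq_comp hF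
    have hF1 : q (((1:ℝ):ℂ) * z₀) = q z₀ := by norm_num
    rw [hF1] at hD
    have h2 : 2 ≤ 2 * ((starRingEnd ℂ) (q z₀) * (z₀ • q')).re := by
      refine slope_ge hD ?_ ?_
      · simpa [hF1] using hNq
      · intro t ht
        have := hschwarz t ht
        rw [Complex.normSq_eq_norm_sq]
        nlinarith [norm_nonneg (q ((t:ℂ) * z₀))]
    rw [hK_def]
    rw [smul_eq_mul] at h2
    linarith
  -- tangential derivative: K.im = 0
  have hKim : K.im = 0 := by
    have hin1 : HasDerivAt (fun θ : ℝ => (θ:ℂ) * I) I 0 := by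
      simpa using (Complex.ofRealCLM.hasDerivAt (x := (0:ℝ))).mul_const I
    have hin2 : HasDerivAt Complex.exp (Complex.exp (((0:ℝ):ℂ) * I)) (((0:ℝ):ℂ) * I) :=
      Complex.hasDerivAt_exp _
    have hin3 : HasDerivAt (fun θ : ℝ => Complex.exp ((θ:ℂ) * I)) I 0 := by
      have := hin2.scomp 0 hin1
      simp at this; exact this
    have hin4 : HasDerivAt (fun θ : ℝ => z₀ * Complex.exp ((θ:ℂ) * I)) (z₀ * I) 0 :=
      hin3.const_mul z₀
    have hbase : z₀ * Complex.exp (((0:ℝ):ℂ) * I) = z₀ := by simp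
    have hg : HasDerivAt q q' (z₀ * Complex.exp (((0:ℝ):ℂ) * I)) := by rw [hbase]; exact hqder
    have hG : HasDerivAt (fun θ : ℝ => q (z₀ * Complex.exp ((θ:ℂ) * I))) ((z₀ * I) • q') 0 :=
      by have := hg.scomp 0 hin4; exact this
    have hD := hasDerivAt_normSq_comp hG
    have hG0 : q (z₀ * Complex.exp (((0:ℝ):ℂ) * I)) = q z₀ := by rw [hbase]
    rw [hG0] at hD
    have hmax : IsLocalMax (fun θ : ℝ => Complex.normSq (q (z₀ * Complex.exp ((θ:ℂ) * I)))) 0 := by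
      apply Filter.Eventually.of_forall
      intro θ
      simp only
      rw [hG0, hNq]
      have hnorm : ‖z₀ * Complex.exp ((θ:ℂ) * I)‖ = r := by
        rw [norm_mul, Complex.norm_exp_ofReal_mul_I, mul_one]
      have := hq_le_one _ hnorm.le
      rw [Complex.normSq_eq_norm_sq]
      nlinarith [norm_nonneg (q (z₀ * Complex.exp ((θ:ℂ) * I)))]
    have hzero := hmax.hasDerivAt_eq_zero hD
    have hrot : (starRingEnd ℂ) (q z₀) * ((z₀ * I) • q') = I * K := by
      rw [hK_def, smul_eq_mul]; ring
    rw [hrot] at hzero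
    have : (I * K).re = -K.im := by simp [Complex.mul_re]
    rw [this] at hzero
    linarith
  have hKval : K = ((K.re : ℝ) : ℂ) := by
    apply Complex.ext
    · simp
    · simp [hKim]
  -- z₀ * q' = q z₀ * K
  have hq'eq : z₀ * q' = q z₀ * K := by
    have hunit : q z₀ * (starRingEnd ℂ) (q z₀) = 1 := by
      rw [Complex.mul_conj, hNq]; norm_num
    calc z₀ * q' = q z₀ * (starRingEnd ℂ) (q z₀) * (z₀ * q') := by rw [hunit]; ring
    _ = q z₀ * K := by rw [hK_def]; ring
  -- the key algebraic identity : z₀ * p' = σ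
  set N : ℝ := Complex.normSq (c - p z₀) with hN_def
  have hNpos : 0 < N := by
    rw [hN_def]
    apply Complex.normSq_pos.mpr
    intro h0'
    have : (c - p z₀).re = 0 := by rw [h0']; simp
    rw [Complex.sub_re, hc_re, hre0] at this
    linarith
  set σ : ℝ := -(K.re * N) / (2 * Real.cos lam) with hσ_def
  have hconj_d : (starRingEnd ℂ) (c - p z₀) = d := by
    apply Complex.ext
    · simp [hd_def, Complex.sub_re, Complex.add_re, hre0]
    · simp [hd_def, Complex.sub_im, Complex.add_im]
  have hcd : (c - p z₀) * d = ((N : ℝ) : ℂ) := by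
    rw [← hconj_d, Complex.mul_conj, hN_def]
  have hcc : c + (starRingEnd ℂ) c = ((2 * Real.cos lam : ℝ) : ℂ) := by
    rw [Complex.add_conj, hc_re]
  have hsigma : z₀ * p' = ((σ : ℝ) : ℂ) := by
    have e2 : q z₀ = (c - p z₀) / d := by rw [hq_def]
    have e3 := hq'eq
    rw [hq'_def, e2, hKval, hcc] at e3
    field_simp [hd_ne] at e3
    have hcosC : ((2 * Real.cos lam : ℝ) : ℂ) ≠ 0 := by
      simp only [ne_eq, Complex.ofReal_eq_zero]
      positivity
    rw [hσ_def]
    push_cast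
    have hcc2 : (2 * Complex.cos (lam:ℂ) : ℂ) ≠ 0 := by
      rw [← Complex.ofReal_cos]
      simp only [ne_eq, mul_eq_zero, OfNat.ofNat_ne_zero, Complex.ofReal_eq_zero, false_or]
      exact hcos.ne'
    rw [eq_div_iff hcc2]
    have e5 : z₀ * p' * (2 * Complex.cos (lam:ℂ)) * d = -((K.re:ℂ) * (N:ℂ)) * d := by
      push_cast at e3
      linear_combination -d * e3 - (K.re:ℂ) * d * hcd
    exact mul_right_cancel₀ hd_ne e5
  -- final contradiction
  have hhz₀ : h z₀ ≠ 0 := hne z₀ hz₀ball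
  have hderiv_p : p' = c * deriv h z₀ := by
    rw [hp'_def, hp_def]
    exact deriv_const_mul c ((hanal z₀ hz₀ball).differentiableAt (isOpen_ball.mem_nhds hz₀ball))
  have key : z₀ * (c * deriv h z₀) = ((σ:ℝ):ℂ) := by rw [← hderiv_p]; exact hsigma
  have hchz : c * h z₀ = ((ρ:ℝ):ℂ) * I := hpz₀
  set A : ℝ := ρ - σ / ρ with hA_def
  have hρC : ((ρ:ℝ):ℂ) ≠ 0 := Complex.ofReal_ne_zero.mpr hρ0
  have hAc : ((A:ℝ):ℂ) * ((ρ:ℝ):ℂ) = ((ρ:ℝ):ℂ) * ((ρ:ℝ):ℂ) - ((σ:ℝ):ℂ) := by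
    rw [hA_def]
    push_cast
    field_simp
  have hAeq : c * h z₀ + z₀ * deriv h z₀ / h z₀ = ((A:ℝ):ℂ) * I := by
    have hIC : (I:ℂ) * I = -1 := Complex.I_mul_I
    have e7 : (c * h z₀ + z₀ * deriv h z₀ / h z₀) * (c * h z₀)
        = (((A:ℝ):ℂ) * I) * (c * h z₀) := by
      have lhs : (c * h z₀ + z₀ * deriv h z₀ / h z₀) * (c * h z₀)
          = (c * h z₀) * (c * h z₀) + z₀ * (c * deriv h z₀) := by
        field_simp
      rw [lhs, key, hchz]
      linear_combination (((ρ:ℝ):ℂ) * ((ρ:ℝ):ℂ) - ((A:ℝ):ℂ) * ((ρ:ℝ):ℂ)) * hIC + hAc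
    exact mul_right_cancel₀ (by rw [hchz]; exact mul_ne_zero hρC Complex.I_ne_zero) e7
  -- the value of N
  have hNval : N = 1 + 2 * ρ * Real.sin lam + ρ^2 := by
    rw [hN_def, hpz₀]
    simp only [Complex.normSq_apply, Complex.sub_re, Complex.sub_im, Complex.mul_re,
      Complex.mul_im, Complex.ofReal_re, Complex.ofReal_im, Complex.I_re, Complex.I_im,
      hc_re, hc_im]
    linear_combination Real.sin_sq_add_cos_sq lam
  clear_value A σ N K ρ
  have hAbound : (Real.cos lam)⁻¹ * Real.sqrt (1 + 2 * Real.cos lam) - Real.tan lam ≤ |A| := by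
    rw [hA_def, hσ_def, Real.tan_eq_sin_div_cos]
    exact bound_aux hcos hsin hKre hNval hNpos hρ0
  exact hslit z₀ hz₀ball A hAbound hAeq
end

section
/- Let α ∈ [0, 1), λ ∈ [0, π/2), and let p be analytic on the open unit disk 𝔻 with p(0) = 1 and p(z) ≠ α for all z ∈ 𝔻. Suppose that for every z ∈ 𝔻 and every real number A with |A| ≥ sec λ · √(1 + 2 cos λ) − tan λ one has e^{−iλ}·(p(z) − α)/(1 − α) + z p′(z)/(p(z) − α) ≠ iA. Then Re(e^{−iλ} p(z)) > α cos λ for all z ∈ 𝔻. -/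
open Complex Metric


lemma radial_nonneg (q : ℂ → ℂ) (hq : DifferentiableOn ℂ q (ball (0:ℂ) 1))
    (z : ℂ) (hz : ‖z‖ < 1) (h0 : 0 < ‖z‖) (hpos : ∀ y : ℂ, ‖y‖ < ‖z‖ → 0 < (q y).re) :
    0 ≤ (q z).re := by
  have hcont : ContinuousAt (fun t : ℝ => (q ((t:ℂ) * z)).re) 1 := by
    have h1 : ContinuousAt q z :=
      (hq.differentiableAt (isOpen_ball.mem_nhds (mem_ball_zero_iff.2 hz))).continuousAt
    have h2 : ContinuousAt (fun t : ℝ => (t:ℂ) * z) 1 := by fun_prop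
    exact (Complex.continuous_re.continuousAt.comp (ContinuousAt.comp (by simpa using h1) h2))
  have hT : Filter.Tendsto (fun t : ℝ => (q ((t:ℂ) * z)).re) (nhdsWithin 1 (Set.Iio 1))
      (nhds ((q z).re)) := by
    have := hcont.continuousWithinAt (s := Set.Iio 1)
    simpa using this.tendsto
  refine ge_of_tendsto hT ?_
  filter_upwards [Ioo_mem_nhdsLT_of_mem (by constructor <;> norm_num : (1:ℝ) ∈ Set.Ioc 0 1)] with t ht
  have : ‖(t:ℂ) * z‖ < ‖z‖ := by
    rw [norm_mul, Complex.norm_real, Real.norm_eq_abs]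
    have : |t| < 1 := abs_lt.2 ⟨by linarith [ht.1], ht.2⟩
    nlinarith [h0, abs_nonneg t]
  exact le_of_lt (hpos _ this)

lemma hasDerivAt_normSq_comp_s4 {g : ℝ → ℂ} {d : ℂ} {t : ℝ} (h : HasDerivAt g d t) :
    HasDerivAt (fun s => Complex.normSq (g s)) (2 * ((g t).re * d.re + (g t).im * d.im)) t := by
  have hre : HasDerivAt (fun s => (g s).re) d.re t :=
    (Complex.reCLM.hasFDerivAt.comp_hasDerivAt t h)
  have him : HasDerivAt (fun s => (g s).im) d.im t :=
    (Complex.imCLM.hasFDerivAt.comp_hasDerivAt t h)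
  have := (hre.mul hre).add (him.mul him)
  simp only [Complex.normSq_apply]
  refine this.congr_deriv ?_
  ring


lemma touch (q : ℂ → ℂ) (hq : DifferentiableOn ℂ q (ball (0:ℂ) 1))
    (h0 : 0 < (q 0).re) (z₁ : ℂ) (hz₁ : z₁ ∈ ball (0:ℂ) 1) (hz₁' : (q z₁).re ≤ 0) :
    ∃ z₀ : ℂ, ‖z₀‖ < 1 ∧ 0 < ‖z₀‖ ∧ (q z₀).re = 0 ∧ ∀ z : ℂ, ‖z‖ < ‖z₀‖ → 0 < (q z).re := by
  have hball : ∀ z : ℂ, ‖z‖ ≤ ‖z₁‖ → z ∈ ball (0:ℂ) 1 := by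
    intro z hz
    rw [mem_ball_zero_iff]
    exact lt_of_le_of_lt hz (mem_ball_zero_iff.1 hz₁)
  have hqc : ContinuousOn (fun z => (q z).re) (closedBall (0:ℂ) ‖z₁‖) := by
    apply (Complex.continuous_re.comp_continuousOn (hq.continuousOn)).mono
    intro z hz
    exact hball z (by simpa [mem_closedBall, dist_zero_right] using hz)
  set K : Set ℂ := closedBall (0:ℂ) ‖z₁‖ ∩ (fun z => (q z).re) ⁻¹' Set.Iic 0 with hK
  have hKclosed : IsClosed K := hqc.preimage_isClosed_of_isClosed isClosed_closedBall isClosed_Iic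
  have hKcompact : IsCompact K :=
    (isCompact_closedBall _ _).of_isClosed_subset hKclosed Set.inter_subset_left
  have hKne : K.Nonempty := ⟨z₁, by simp [hK, mem_closedBall, dist_zero_right], hz₁'⟩
  obtain ⟨z₀, hz₀K, hz₀min⟩ := hKcompact.exists_isMinOn hKne continuous_norm.continuousOn
  have hz₀le : ‖z₀‖ ≤ ‖z₁‖ := by simpa [mem_closedBall, dist_zero_right] using hz₀K.1
  have hz₀lt : ‖z₀‖ < 1 := lt_of_le_of_lt hz₀le (mem_ball_zero_iff.1 hz₁)
  have hz₀re : (q z₀).re ≤ 0 := hz₀K.2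
  have hz₀ne : 0 < ‖z₀‖ := by
    rcases eq_or_lt_of_le (norm_nonneg z₀) with h | h
    · exfalso; have : z₀ = 0 := by simpa using h.symm
      rw [this] at hz₀re; linarith
    · exact h
  have hmin : ∀ z : ℂ, ‖z‖ < ‖z₀‖ → 0 < (q z).re := by
    intro z hz
    by_contra h
    push_neg at h
    have : z ∈ K := ⟨mem_closedBall_zero_iff.2 (le_trans hz.le hz₀le), h⟩
    exact absurd (hz₀min this) (by simpa using hz)
  refine ⟨z₀, hz₀lt, hz₀ne, ?_, hmin⟩
  -- Re q z₀ ≥ 0 by radial limit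
  have hge : 0 ≤ (q z₀).re := by
    have hcont : ContinuousAt (fun t : ℝ => (q ((t:ℂ) * z₀)).re) 1 := by
      have h1 : ContinuousAt q z₀ :=
        (hq.differentiableAt (isOpen_ball.mem_nhds (mem_ball_zero_iff.2 hz₀lt))).continuousAt
      have h2 : ContinuousAt (fun t : ℝ => (t:ℂ) * z₀) 1 := by fun_prop
      exact (Complex.continuous_re.continuousAt.comp
        (ContinuousAt.comp (by simpa using h1) h2))
    have hT : Filter.Tendsto (fun t : ℝ => (q ((t:ℂ) * z₀)).re) (nhdsWithin 1 (Set.Iio 1))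
        (nhds ((q z₀).re)) := by
      have := hcont.continuousWithinAt (s := Set.Iio 1)
      simpa using this.tendsto
    refine ge_of_tendsto hT ?_
    filter_upwards [Ioo_mem_nhdsLT_of_mem (by constructor <;> norm_num : (1:ℝ) ∈ Set.Ioc 0 1)] with t ht
    have : ‖(t:ℂ) * z₀‖ < ‖z₀‖ := by
      rw [norm_mul, Complex.norm_real, Real.norm_eq_abs]
      have : |t| < 1 := abs_lt.2 ⟨by linarith [ht.1], ht.2⟩
      nlinarith [hz₀ne, abs_nonneg t]
    exact le_of_lt (hmin _ this)
  linarith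

lemma mm (q : ℂ → ℂ) (a : ℂ) (ha : 0 < a.re)
    (hq : DifferentiableOn ℂ q (ball (0:ℂ) 1)) (hq0 : q 0 = a)
    (z₀ : ℂ) (h1 : ‖z₀‖ < 1) (h2 : 0 < ‖z₀‖) (h3 : (q z₀).re = 0)
    (h4 : ∀ z : ℂ, ‖z‖ < ‖z₀‖ → 0 < (q z).re) :
    ∃ k : ℝ, 1 ≤ k ∧
      z₀ * deriv q z₀ = -((k * Complex.normSq (a - q z₀) / (2 * a.re) : ℝ) : ℂ) := by
  set r₀ : ℝ := ‖z₀‖ with hr₀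
  have hsph : ∀ z : ℂ, ‖z‖ ≤ r₀ → 0 ≤ (q z).re := by
    intro z hz
    rcases lt_or_eq_of_le hz with h | h
    · exact (h4 z h).le
    · exact radial_nonneg q hq z (h ▸ h1) (h ▸ h2) (fun y hy => h4 y (h ▸ hy))
  set w : ℂ → ℂ := fun z => (a - q z) / ((starRingEnd ℂ) a + q z) with hw
  have hden : ∀ z : ℂ, 0 ≤ (q z).re → (starRingEnd ℂ) a + q z ≠ 0 := by
    intro z hz h
    have := congrArg Complex.re h
    simp [Complex.add_re, Complex.conj_re] at this
    linarith
  have hnormSq_diff : ∀ z : ℂ, Complex.normSq ((starRingEnd ℂ) a + q z)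
      - Complex.normSq (a - q z) = 4 * a.re * (q z).re := by
    intro z
    simp only [Complex.normSq_apply, Complex.add_re, Complex.add_im, Complex.sub_re,
      Complex.sub_im, Complex.conj_re, Complex.conj_im]
    ring
  have habs_le : ∀ z : ℂ, 0 ≤ (q z).re → ‖w z‖ ≤ 1 := by
    intro z hz
    have hd := hden z hz
    have hdpos : 0 < ‖(starRingEnd ℂ) a + q z‖ := norm_pos_iff.mpr hd
    rw [hw]
    simp only [norm_div]
    rw [div_le_one hdpos]
    nlinarith [Complex.sq_norm (a - q z), Complex.sq_norm ((starRingEnd ℂ) a + q z),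
      norm_nonneg (a - q z), hnormSq_diff z, ha, hz]
  have habs_lt : ∀ z : ℂ, 0 < (q z).re → ‖w z‖ < 1 := by
    intro z hz
    have hd := hden z hz.le
    have hdpos : 0 < ‖(starRingEnd ℂ) a + q z‖ := norm_pos_iff.mpr hd
    rw [hw]
    simp only [norm_div]
    rw [div_lt_one hdpos]
    nlinarith [Complex.sq_norm (a - q z), Complex.sq_norm ((starRingEnd ℂ) a + q z),
      norm_nonneg (a - q z), hnormSq_diff z, ha, hz]
  have hw0 : w 0 = 0 := by simp [hw, hq0]
  have habs1 : ‖w z₀‖ = 1 := by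
    have hd := hden z₀ h3.ge
    have hdpos : 0 < ‖(starRingEnd ℂ) a + q z₀‖ := norm_pos_iff.mpr hd
    rw [hw]
    simp only [norm_div]
    rw [div_eq_one_iff_eq hdpos.ne']
    have h := hnormSq_diff z₀
    rw [h3] at h
    have : Complex.normSq (a - q z₀) = Complex.normSq ((starRingEnd ℂ) a + q z₀) := by linarith
    nlinarith [Complex.sq_norm (a - q z₀), Complex.sq_norm ((starRingEnd ℂ) a + q z₀),
      norm_nonneg (a - q z₀), norm_nonneg ((starRingEnd ℂ) a + q z₀)]
  -- differentiability of w on ball r₀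
  have hqsub : DifferentiableOn ℂ q (ball (0:ℂ) r₀) :=
    hq.mono (ball_subset_ball h1.le)
  have hwdiff : DifferentiableOn ℂ w (ball (0:ℂ) r₀) := by
    apply DifferentiableOn.div
    · exact (differentiableOn_const a).sub hqsub
    · exact (differentiableOn_const _).add hqsub
    · intro z hz
      exact hden z (hsph z (mem_ball_zero_iff.1 hz).le)
  have hmaps : Set.MapsTo w (ball (0:ℂ) r₀) (ball (w 0) 1) := by
    intro z hz
    rw [hw0, mem_ball_zero_iff]
    exact habs_lt z (h4 z (mem_ball_zero_iff.1 hz))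
  have hschwarz : ∀ z : ℂ, ‖z‖ < r₀ → ‖w z‖ ≤ ‖z‖ / r₀ := by
    intro z hz
    have := Complex.dist_le_div_mul_dist_of_mapsTo_ball hwdiff (hmaps.mono_right ball_subset_closedBall)
      (mem_ball_zero_iff.2 hz)
    rw [hw0] at this
    simpa [dist_eq_norm, div_eq_inv_mul] using this
  -- derivative of q and w at z₀
  have hz₀mem : z₀ ∈ ball (0:ℂ) 1 := mem_ball_zero_iff.2 h1
  have hqd : HasDerivAt q (deriv q z₀) z₀ :=
    (hq.differentiableAt (isOpen_ball.mem_nhds hz₀mem)).hasDerivAt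
  set q' : ℂ := deriv q z₀ with hq'
  set N : ℂ := a - q z₀ with hN
  set D : ℂ := (starRingEnd ℂ) a + q z₀ with hD
  have hDne : D ≠ 0 := hden z₀ h3.ge
  set W' : ℂ := ((-q') * D - N * q') / D ^ 2 with hW'
  have hWd : HasDerivAt w W' z₀ := by
    have hnum : HasDerivAt (fun z => a - q z) (-q') z₀ := by
      have := (hasDerivAt_const z₀ a).sub hqd
      rw [zero_sub] at this
      exact this
    have hd2 : HasDerivAt (fun z => (starRingEnd ℂ) a + q z) q' z₀ := by
      have := (hasDerivAt_const z₀ ((starRingEnd ℂ) a)).add hqd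
      rw [zero_add] at this
      exact this
    exact hnum.div hd2 hDne
  -- radial derivative estimate
  have hg : HasDerivAt (fun t : ℝ => w ((t:ℂ) * z₀)) (W' * z₀) 1 := by
    have hinner : HasDerivAt (fun t : ℝ => (t:ℂ) * z₀) z₀ 1 := by
      simpa using (Complex.ofRealCLM.hasDerivAt (x := (1:ℝ))).mul_const z₀
    have := HasDerivAt.comp (1:ℝ) (by simpa using hWd) hinner
    simpa [Function.comp_def] using this
  set dd : ℂ := W' * z₀ with hdd_def
  have hψ : HasDerivAt (fun t : ℝ => Complex.normSq (w ((t:ℂ) * z₀)))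
      (2 * ((w z₀).re * dd.re + (w z₀).im * dd.im)) 1 := by
    have := hasDerivAt_normSq_comp_s4 hg
    simpa using this
  have hψ1 : Complex.normSq (w z₀) = 1 := by
    rw [← Complex.sq_norm, habs1]; norm_num
  set k : ℝ := (w z₀).re * dd.re + (w z₀).im * dd.im with hk
  have hkge : 1 ≤ k := by
    have hslope : Filter.Tendsto (slope (fun t : ℝ => Complex.normSq (w ((t:ℂ) * z₀))) 1)
        (nhdsWithin 1 (Set.Iio 1)) (nhds (2 * k)) :=
      (hasDerivAt_iff_tendsto_slope.1 hψ).mono_left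
        (nhdsWithin_mono 1 (fun x hx => ne_of_lt hx))
    have hev : ∀ᶠ t in nhdsWithin (1:ℝ) (Set.Iio 1),
        1 + t ≤ slope (fun t : ℝ => Complex.normSq (w ((t:ℂ) * z₀))) 1 t := by
      filter_upwards [Ioo_mem_nhdsLT_of_mem
        (by constructor <;> norm_num : (1:ℝ) ∈ Set.Ioc 0 1)] with t ht
      have hn : ‖(t:ℂ) * z₀‖ < r₀ := by
        rw [norm_mul, Complex.norm_real, Real.norm_eq_abs]
        have habst : |t| < 1 := abs_lt.2 ⟨by linarith [ht.1], ht.2⟩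
        nlinarith [h2, abs_nonneg t]
      have hb : Complex.normSq (w ((t:ℂ) * z₀)) ≤ t^2 := by
        have hs := hschwarz _ hn
        have hnt : ‖(t:ℂ) * z₀‖ = |t| * r₀ := by
          rw [norm_mul, Complex.norm_real, Real.norm_eq_abs, ← hr₀]
        rw [hnt] at hs
        have hr : |t| * r₀ / r₀ = |t| := by field_simp
        rw [hr] at hs
        have habs : ‖w ((t:ℂ) * z₀)‖ ≤ |t| := hs
        nlinarith [Complex.sq_norm (w ((t:ℂ) * z₀)), norm_nonneg (w ((t:ℂ) * z₀)),
          _root_.sq_abs t, abs_nonneg t]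
      rw [slope_def_field]
      have h1lt : t - 1 < 0 := by linarith [ht.2]
      rw [le_div_iff_of_neg h1lt]
      have hψ1' : Complex.normSq (w (((1:ℝ):ℂ) * z₀)) = 1 := by
        simpa using hψ1
      rw [hψ1']
      nlinarith [hb]
    have htend : Filter.Tendsto (fun t : ℝ => 1 + t) (nhdsWithin (1:ℝ) (Set.Iio 1))
        (nhds 2) := by
      have h : Filter.Tendsto (fun t : ℝ => 1 + t) (nhds (1:ℝ)) (nhds (1 + 1)) :=
        tendsto_const_nhds.add Filter.tendsto_id
      norm_num at h
      exact h.mono_left nhdsWithin_le_nhds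
    have := le_of_tendsto_of_tendsto htend hslope hev
    linarith
  -- tangential derivative is zero
  have hsphere_le : ∀ θ : ℝ, Complex.normSq (w (Complex.exp ((θ:ℂ) * I) * z₀)) ≤ 1 := by
    intro θ
    have hnorm : ‖Complex.exp ((θ:ℂ) * I) * z₀‖ = r₀ := by
      rw [norm_mul, Complex.norm_exp_ofReal_mul_I, one_mul]
    have h := habs_le _ (hsph _ (le_of_eq hnorm))
    nlinarith [Complex.sq_norm (w (Complex.exp ((θ:ℂ) * I) * z₀)),
      norm_nonneg (w (Complex.exp ((θ:ℂ) * I) * z₀))]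
  have hχ : HasDerivAt (fun θ : ℝ => Complex.normSq (w (Complex.exp ((θ:ℂ) * I) * z₀)))
      (2 * ((w z₀).re * (W' * (I * z₀)).re + (w z₀).im * (W' * (I * z₀)).im)) 0 := by
    have h1 : HasDerivAt (fun θ : ℝ => (θ:ℂ) * I) I 0 := by
      simpa using (Complex.ofRealCLM.hasDerivAt (x := (0:ℝ))).mul_const I
    have h2 : HasDerivAt (fun θ : ℝ => Complex.exp ((θ:ℂ) * I)) I 0 := by
      have := HasDerivAt.comp (0:ℝ) (Complex.hasDerivAt_exp (((0:ℝ):ℂ) * I)) h1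
      simpa [Function.comp_def] using this
    have h3 : HasDerivAt (fun θ : ℝ => Complex.exp ((θ:ℂ) * I) * z₀) (I * z₀) 0 :=
      h2.mul_const z₀
    have h4 := HasDerivAt.comp (0:ℝ) (by simpa using hWd) h3
    have := hasDerivAt_normSq_comp_s4 (by simpa [Function.comp_def] using h4 :
      HasDerivAt (fun θ : ℝ => w (Complex.exp ((θ:ℂ) * I) * z₀)) (W' * (I * z₀)) 0)
    simpa using this
  have hmax : IsLocalMax (fun θ : ℝ => Complex.normSq (w (Complex.exp ((θ:ℂ) * I) * z₀)))
      0 := by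
    apply Filter.Eventually.of_forall
    intro θ
    simpa [hψ1] using hsphere_le θ
  have hχ0 := hmax.hasDerivAt_eq_zero hχ
  have him0 : (w z₀).re * dd.im - (w z₀).im * dd.re = 0 := by
    have he : W' * (I * z₀) = I * dd := by rw [hdd_def]; ring
    rw [he] at hχ0
    simp only [Complex.mul_re, Complex.mul_im, Complex.I_re, Complex.I_im] at hχ0
    linarith
  -- assemble: conj (w z₀) * dd = k
  have hKc : (starRingEnd ℂ) (w z₀) * dd = (k:ℂ) := by
    apply Complex.ext
    · simp only [Complex.mul_re, Complex.conj_re, Complex.conj_im, Complex.ofReal_re, hk]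
      ring
    · simp only [Complex.mul_im, Complex.conj_re, Complex.conj_im, Complex.ofReal_im]
      linarith
  have hddk : dd = (k:ℂ) * w z₀ := by
    have h := congrArg (fun u => w z₀ * u) hKc
    rw [← mul_assoc, Complex.mul_conj, hψ1] at h
    rw [mul_comm]
    simpa using h
  -- algebra
  have hwz₀ : w z₀ = N / D := rfl
  have hDN : D = (starRingEnd ℂ) N := by
    apply Complex.ext
    · simp [hD, hN, Complex.add_re, Complex.sub_re, Complex.conj_re, h3]
    · simp [hD, hN, Complex.add_im, Complex.sub_im, Complex.conj_im]
  have hND : N * D = ((Complex.normSq N : ℝ) : ℂ) := by rw [hDN, Complex.mul_conj]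
  have hDplusN : D + N = ((2 * a.re : ℝ) : ℂ) := by
    have : D + N = a + (starRingEnd ℂ) a := by rw [hD, hN]; ring
    rw [this, Complex.add_conj]
  refine ⟨k, hkge, ?_⟩
  have heq : W' * z₀ = (k:ℂ) * w z₀ := hdd_def ▸ hddk
  rw [hW', hwz₀] at heq
  have h6 : (-q' * D - N * q') * z₀ * D = (k:ℂ) * N * D ^ 2 := by
    rw [div_mul_eq_mul_div, mul_div_assoc', div_eq_div_iff (pow_ne_zero 2 hDne) hDne] at heq
    linear_combination heq
  have h2a : ((2 * a.re : ℝ) : ℂ) ≠ 0 := by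
    exact_mod_cast (by positivity : (0:ℝ) < 2 * a.re).ne'
  have hcan : (z₀ * q' * ((2 * a.re : ℝ) : ℂ)) * D
      = (-(((k * Complex.normSq N) : ℝ) : ℂ)) * D := by
    push_cast
    push_cast at hND hDplusN
    linear_combination (-1 : ℂ) * h6 + (-(z₀ * q' * D)) * hDplusN + (-((k:ℂ) * D)) * hND
  have goal' := mul_right_cancel₀ hDne hcan
  rw [show ((k * Complex.normSq N / (2 * a.re) : ℝ) : ℂ)
      = ((k * Complex.normSq N : ℝ) : ℂ) / ((2 * a.re : ℝ) : ℂ) by push_cast; ring]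
  rw [← neg_div, eq_div_iff h2a]
  exact goal'


lemma ineqC (lam ρ k : ℝ) (hcos : 0 < Real.cos lam) (hsin : 0 ≤ Real.sin lam)
    (hρ : ρ ≠ 0) (hk : 1 ≤ k) :
    (Real.cos lam)⁻¹ * Real.sqrt (1 + 2 * Real.cos lam) - Real.tan lam
      ≤ |ρ + k * (1 + 2 * Real.sin lam * ρ + ρ ^ 2) / (2 * Real.cos lam * ρ)| := by
  set c := Real.cos lam with hc
  set s := Real.sin lam with hs
  have hs2 : s ^ 2 + c ^ 2 = 1 := Real.sin_sq_add_cos_sq lam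
  set R := Real.sqrt (1 + 2 * c) with hRdef
  have hR0 : 0 ≤ R := Real.sqrt_nonneg _
  have hR2 : R ^ 2 = 1 + 2 * c := Real.sq_sqrt (by linarith)
  have htan : Real.tan lam = s / c := Real.tan_eq_sin_div_cos lam
  rw [htan]
  set P := 1 + 2 * s * ρ + ρ ^ 2 with hP
  have hPpos : 0 < P := by nlinarith [sq_nonneg (s + ρ)]
  rcases hρ.lt_or_gt with hneg | hpos
  · -- ρ < 0
    have h2cρ : 0 < 2 * c * (-ρ) := mul_pos (by positivity) (neg_pos.2 hneg)
    have key : (c⁻¹ * R - s / c) * (2 * c * (-ρ))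
        ≤ (-(ρ + k * P / (2 * c * ρ))) * (2 * c * (-ρ)) := by
      have hAe : (-(ρ + k * P / (2 * c * ρ))) * (2 * c * (-ρ)) = 2 * c * ρ ^ 2 + k * P := by
        field_simp
      have hBe : (c⁻¹ * R - s / c) * (2 * c * (-ρ)) = -2 * R * ρ + 2 * s * ρ := by
        field_simp
        ring
      rw [hAe, hBe]
      nlinarith [sq_nonneg (R * ρ + 1), mul_le_mul_of_nonneg_left hk hPpos.le]
    have h := (mul_le_mul_iff_of_pos_right h2cρ).1 key
    calc c⁻¹ * R - s / c ≤ -(ρ + k * P / (2 * c * ρ)) := h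
      _ ≤ |ρ + k * P / (2 * c * ρ)| := neg_le_abs _
  · -- ρ > 0
    have h2cρ : 0 < 2 * c * ρ := by positivity
    have key : (c⁻¹ * R - s / c) * (2 * c * ρ)
        ≤ (ρ + k * P / (2 * c * ρ)) * (2 * c * ρ) := by
      have hAe : (ρ + k * P / (2 * c * ρ)) * (2 * c * ρ) = 2 * c * ρ ^ 2 + k * P := by
        field_simp
      have hBe : (c⁻¹ * R - s / c) * (2 * c * ρ) = 2 * R * ρ - 2 * s * ρ := by
        field_simp
      rw [hAe, hBe]
      nlinarith [sq_nonneg (R * ρ - 1), mul_le_mul_of_nonneg_left hk hPpos.le, mul_nonneg hsin hpos.le]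
    have h := (mul_le_mul_iff_of_pos_right h2cρ).1 key
    calc c⁻¹ * R - s / c ≤ ρ + k * P / (2 * c * ρ) := h
      _ ≤ |ρ + k * P / (2 * c * ρ)| := le_abs_self _

theorem stmt_4 (α lam : ℝ) (hα : α ∈ Set.Ico (0 : ℝ) 1)
    (hlam : lam ∈ Set.Ico (0 : ℝ) (Real.pi / 2))
    (p : ℂ → ℂ) (hanal : DifferentiableOn ℂ p (ball (0 : ℂ) 1))
    (hp0 : p 0 = 1) (hne : ∀ z ∈ ball (0 : ℂ) 1, p z ≠ (α : ℂ))
    (hslit : ∀ z ∈ ball (0 : ℂ) 1, ∀ A : ℝ,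
      (Real.cos lam)⁻¹ * Real.sqrt (1 + 2 * Real.cos lam) - Real.tan lam ≤ |A| →
      Complex.exp (-(lam : ℂ) * I) * ((p z - (α : ℂ)) / (1 - (α : ℂ))) +
        z * deriv p z / (p z - (α : ℂ)) ≠ A * I) :
    ∀ z ∈ ball (0 : ℂ) 1, α * Real.cos lam < (Complex.exp (-(lam : ℂ) * I) * p z).re := by
  obtain ⟨hα0, hα1⟩ := hα
  obtain ⟨hl0, hl1⟩ := hlam
  have hπ := Real.pi_pos
  have hcos : 0 < Real.cos lam :=
    Real.cos_pos_of_mem_Ioo ⟨by linarith, hl1⟩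
  have hsin : 0 ≤ Real.sin lam :=
    Real.sin_nonneg_of_nonneg_of_le_pi hl0 (by linarith)
  set a : ℂ := Complex.exp (-(lam:ℂ) * I) with ha
  have ha' : a = ((Real.cos lam : ℝ) : ℂ) - ((Real.sin lam : ℝ) : ℂ) * I := by
    rw [ha, show -(lam:ℂ) * I = ((-lam : ℝ) : ℂ) * I by push_cast; ring, Complex.exp_mul_I,
      ← Complex.ofReal_cos, ← Complex.ofReal_sin, Real.cos_neg, Real.sin_neg]
    push_cast
    ring
  have hare : a.re = Real.cos lam := by rw [ha']; simp [Complex.cos_ofReal_re]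
  have haim : a.im = -Real.sin lam := by rw [ha']; simp [Complex.sin_ofReal_re]
  have hane : a ≠ 0 := Complex.exp_ne_zero _
  have h1α : (1:ℂ) - (α:ℂ) ≠ 0 := by
    rw [show (1:ℂ) - (α:ℂ) = ((1 - α : ℝ) : ℂ) by push_cast; ring]
    exact_mod_cast (show (1 - α : ℝ) ≠ 0 by linarith)
  intro z hz
  by_contra hcon
  push_neg at hcon
  set q : ℂ → ℂ := fun z => a * ((p z - (α:ℂ)) / (1 - (α:ℂ))) with hqdef
  have hqdiff : DifferentiableOn ℂ q (ball (0:ℂ) 1) := by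
    apply DifferentiableOn.const_mul
    exact (hanal.sub (differentiableOn_const _)).div (differentiableOn_const _)
      (fun z hz => h1α)
  have hq0 : q 0 = a := by
    rw [hqdef]
    simp only [hp0]
    rw [div_self h1α, mul_one]
  have hqre : ∀ y : ℂ, (q y).re = ((a * p y).re - α * Real.cos lam) / (1 - α) := by
    intro y
    have he : q y = (a * p y - ((α : ℝ):ℂ) * a) / (((1 - α : ℝ)) : ℂ) := by
      rw [hqdef]
      push_cast
      field_simp
    rw [he, Complex.div_ofReal_re]
    congr 1
    rw [Complex.sub_re, Complex.re_ofReal_mul, hare]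
  have hq0re : 0 < (q 0).re := by
    rw [hq0, hare]
    exact hcos
  have hqzre : (q z).re ≤ 0 := by
    rw [hqre]
    apply div_nonpos_of_nonpos_of_nonneg
    · linarith
    · linarith
  obtain ⟨z₀, hz₀1, hz₀pos, hz₀re, hz₀min⟩ := touch q hqdiff hq0re z hz hqzre
  have hz₀mem : z₀ ∈ ball (0:ℂ) 1 := mem_ball_zero_iff.2 hz₀1
  obtain ⟨k, hk1, hkey⟩ := mm q a (by rw [hare]; exact hcos) hqdiff hq0 z₀ hz₀1 hz₀pos hz₀re hz₀min
  set ρ : ℝ := (q z₀).im with hρdef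
  have hqz₀ : q z₀ = (ρ:ℝ) * I := by
    apply Complex.ext <;> simp [hz₀re, hρdef]
  have hρne : ρ ≠ 0 := by
    intro h
    have hq0' : q z₀ = 0 := by rw [hqz₀, h]; simp
    rw [hqdef] at hq0'
    simp only [mul_eq_zero, div_eq_zero_iff, sub_eq_zero] at hq0'
    rcases hq0' with h' | h'
    · exact hane h'
    · rcases h' with h'' | h''
      · exact hne z₀ hz₀mem h''
      · exact h1α (by rw [sub_eq_zero]; exact h''.symm ▸ rfl)
  have hpd : DifferentiableAt ℂ p z₀ := hanal.differentiableAt (isOpen_ball.mem_nhds hz₀mem)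
  have hderiv : deriv q z₀ = a / (1 - (α:ℂ)) * deriv p z₀ := by
    have hfe : q = fun y => (a / (1 - (α:ℂ))) * (p y - (α:ℂ)) := by
      funext y
      rw [hqdef]
      ring
    rw [hfe, deriv_const_mul _ (hpd.sub_const _), deriv_sub_const]
  set σ : ℝ := -(k * Complex.normSq (a - q z₀) / (2 * a.re)) with hσdef
  have hkey' : z₀ * deriv q z₀ = ((σ : ℝ) : ℂ) := by
    rw [hkey, hσdef]
    push_cast
    ring
  have hnsq : Complex.normSq (a - q z₀) = 1 + 2 * Real.sin lam * ρ + ρ ^ 2 := by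
    rw [hqz₀]
    simp only [Complex.normSq_apply, Complex.sub_re, Complex.sub_im, hare, haim,
      Complex.mul_re, Complex.mul_im, Complex.ofReal_re, Complex.ofReal_im,
      Complex.I_re, Complex.I_im]
    have := Real.sin_sq_add_cos_sq lam
    nlinarith [this]
  set A : ℝ := ρ - σ / ρ with hAdef
  have hAeq : A = ρ + k * (1 + 2 * Real.sin lam * ρ + ρ ^ 2) / (2 * Real.cos lam * ρ) := by
    rw [hAdef, hσdef, hnsq, hare]
    field_simp
    ring
  have hAbound : (Real.cos lam)⁻¹ * Real.sqrt (1 + 2 * Real.cos lam) - Real.tan lam ≤ |A| := by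
    rw [hAeq]
    exact ineqC lam ρ k hcos hsin hρne hk1
  apply hslit z₀ hz₀mem A hAbound
  have h1 : a * ((p z₀ - (α:ℂ)) / (1 - (α:ℂ))) = q z₀ := rfl
  have h2 : z₀ * deriv p z₀ / (p z₀ - (α:ℂ)) = z₀ * deriv q z₀ / q z₀ := by
    rw [hderiv, hqdef]
    have hpne : p z₀ - (α:ℂ) ≠ 0 := sub_ne_zero.2 (hne z₀ hz₀mem)
    field_simp
  rw [h1, h2, hkey', hqz₀]
  have hρC : ((ρ:ℝ):ℂ) ≠ 0 := by exact_mod_cast hρne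
  have hAC : ((A:ℝ):ℂ) = (ρ:ℂ) - (σ:ℂ) / (ρ:ℂ) := by rw [hAdef]; push_cast; ring
  clear_value σ A
  rw [hAC]
  field_simp
  linear_combination (σ:ℂ) * Complex.I_sq
end

section
/- Let 0 < λ ≤ 1 and 0 < α ≤ 1. Let f be analytic on the open unit disk 𝔻 with f(0) = 0 and f′(0) = 1, suppose Re(f(z)/z) > 0 for all z ∈ 𝔻 \ {0} (with f(z)/z → 1 as z → 0), and suppose |f′(z)·(z/f(z))^{α+1} − 1| < λ for all z ∈ 𝔻 \ {0}, where z/f(z) = 1/(f(z)/z) and the power is the principal branch. Set R_{λ,α} = ( −(λ + 2(α+1)) + √(λ² + 8λ + 4αλ + 4α² + 8α + 8) ) / (2(λ+1)). Then for every z with |z| < R_{λ,α}, f′(z) ≠ 0 and Re(1 + z f″(z)/f′(z)) > 0; that is, f is convex in |z| < R_{λ,α}. -/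
open Complex Metric Set


private lemma moeb_mem {a w : ℂ} (ha : ‖a‖ < 1) (hw : ‖w‖ < 1) :
    ‖(w + a) / (1 + (starRingEnd ℂ) a * w)‖ < 1 := by
  have hden : ‖(starRingEnd ℂ) a * w‖ < 1 := by
    rw [norm_mul, Complex.norm_conj]
    calc ‖a‖ * ‖w‖ ≤ ‖a‖ * 1 := by
          exact mul_le_mul_of_nonneg_left hw.le (norm_nonneg a)
      _ < 1 := by simpa using ha
  have hne : (1 : ℂ) + (starRingEnd ℂ) a * w ≠ 0 := by
    intro h
    have : ‖(starRingEnd ℂ) a * w‖ = 1 := by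
      have : (starRingEnd ℂ) a * w = -1 := by linear_combination h
      rw [this]; simp
    linarith
  have hpos : 0 < ‖1 + (starRingEnd ℂ) a * w‖ := by
    simpa [norm_pos_iff] using hne
  rw [norm_div, div_lt_one hpos]
  have hsq : ‖w + a‖ ^ 2 < ‖1 + (starRingEnd ℂ) a * w‖ ^ 2 := by
    rw [Complex.sq_norm, Complex.sq_norm]
    simp only [Complex.normSq_apply, Complex.add_re, Complex.add_im, Complex.mul_re,
      Complex.mul_im, Complex.one_re, Complex.one_im, Complex.conj_re, Complex.conj_im]
    have ha2 : a.re * a.re + a.im * a.im < 1 := by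
      have h := Complex.sq_norm a
      rw [Complex.normSq_apply] at h
      nlinarith [norm_nonneg a]
    have hw2 : w.re * w.re + w.im * w.im < 1 := by
      have h := Complex.sq_norm w
      rw [Complex.normSq_apply] at h
      nlinarith [norm_nonneg w]
    nlinarith [ha2, hw2]
  exact lt_of_pow_lt_pow_left₀ 2 (norm_nonneg _) hsq

private lemma moeb_deriv {a w : ℂ} (hne : (1 : ℂ) + (starRingEnd ℂ) a * w ≠ 0) :
    HasDerivAt (fun v => (v + a) / (1 + (starRingEnd ℂ) a * v))
      ((1 - Complex.normSq a) / (1 + (starRingEnd ℂ) a * w) ^ 2) w := by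
  have h1 : HasDerivAt (fun v : ℂ => v + a) 1 w := (hasDerivAt_id w).add_const a
  have h2 : HasDerivAt (fun v : ℂ => 1 + (starRingEnd ℂ) a * v) ((starRingEnd ℂ) a) w := by
    simpa using ((hasDerivAt_id w).const_mul ((starRingEnd ℂ) a)).const_add 1
  have := h1.div h2 hne
  refine this.congr_deriv (Eq.symm ?_)
  have : (starRingEnd ℂ) a * a = (Complex.normSq a : ℂ) := by
    rw [mul_comm, Complex.mul_conj]
  rw [div_left_inj' (pow_ne_zero 2 hne)]
  linear_combination this

/-- Schwarz–Pick derivative inequality. -/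
private lemma spick {ω : ℂ → ℂ} (hd : DifferentiableOn ℂ ω (ball 0 1))
    (hm : MapsTo ω (ball 0 1) (ball 0 1)) {z : ℂ} (hz : z ∈ ball (0:ℂ) 1) :
    ‖deriv ω z‖ * (1 - ‖z‖ ^ 2) ≤ 1 - ‖ω z‖ ^ 2 := by
  have hz1 : ‖z‖ < 1 := mem_ball_zero_iff.1 hz
  set b := ω z with hbdef
  have hb1 : ‖b‖ < 1 := mem_ball_zero_iff.1 (hm hz)
  set φ : ℂ → ℂ := fun v => (v + z) / (1 + (starRingEnd ℂ) z * v) with hφ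
  set ψ : ℂ → ℂ := fun v => (v + -b) / (1 + (starRingEnd ℂ) (-b) * v) with hψ
  set F : ℂ → ℂ := fun v => ψ (ω (φ v)) with hF
  have hφmem : ∀ v ∈ ball (0:ℂ) 1, φ v ∈ ball (0:ℂ) 1 := fun v hv =>
    mem_ball_zero_iff.2 (moeb_mem hz1 (mem_ball_zero_iff.1 hv))
  have hψmem : ∀ v ∈ ball (0:ℂ) 1, ψ v ∈ ball (0:ℂ) 1 := fun v hv =>
    mem_ball_zero_iff.2 (moeb_mem (by simpa using hb1) (mem_ball_zero_iff.1 hv))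
  have hFm : MapsTo F (ball 0 1) (ball 0 1) := fun v hv =>
    hψmem _ (hm (hφmem _ hv))
  have hdenφ : ∀ v : ℂ, ‖v‖ < 1 → (1 : ℂ) + (starRingEnd ℂ) z * v ≠ 0 := by
    intro v hv h
    have h1 : ‖(starRingEnd ℂ) z * v‖ < 1 := by
      rw [norm_mul, Complex.norm_conj]
      nlinarith [norm_nonneg z, norm_nonneg v]
    have : (starRingEnd ℂ) z * v = -1 := by linear_combination h
    rw [this] at h1; simp at h1
  have hdenψ : ∀ v : ℂ, ‖v‖ < 1 → (1 : ℂ) + (starRingEnd ℂ) (-b) * v ≠ 0 := by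
    intro v hv h
    have h1 : ‖(starRingEnd ℂ) (-b) * v‖ < 1 := by
      rw [norm_mul, Complex.norm_conj]
      simp only [norm_neg]
      nlinarith [norm_nonneg b, norm_nonneg v]
    have : (starRingEnd ℂ) (-b) * v = -1 := by linear_combination h
    rw [this] at h1; simp at h1
  have hFd : DifferentiableOn ℂ F (ball 0 1) := by
    intro v hv
    have hv1 : ‖v‖ < 1 := mem_ball_zero_iff.1 hv
    have hφd : DifferentiableAt ℂ φ v := (moeb_deriv (hdenφ v hv1)).differentiableAt
    have hωd : DifferentiableAt ℂ ω (φ v) :=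
      hd.differentiableAt (isOpen_ball.mem_nhds (hφmem v hv))
    have hψd : DifferentiableAt ℂ ψ (ω (φ v)) :=
      (moeb_deriv (hdenψ _ (mem_ball_zero_iff.1 (hm (hφmem v hv))))).differentiableAt
    exact ((hψd.comp v (hωd.comp v hφd))).differentiableWithinAt
  have hφ0 : φ 0 = z := by simp [hφ]
  have hF0 : F 0 = 0 := by
    simp only [hF, hφ0, hψ, ← hbdef]
    simp
  -- derivative of F at 0
  have hφ' : HasDerivAt φ (1 - Complex.normSq z) 0 := by
    have := moeb_deriv (a := z) (w := 0) (by simpa using hdenφ 0 (by simp))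
    simpa using this
  have hω' : HasDerivAt ω (deriv ω z) z :=
    (hd.differentiableAt (isOpen_ball.mem_nhds hz)).hasDerivAt
  have hψ' : HasDerivAt ψ ((1 - Complex.normSq b) / (1 - Complex.normSq b) ^ 2) b := by
    have hne : (1 : ℂ) + (starRingEnd ℂ) (-b) * b ≠ 0 := hdenψ b hb1
    have h := moeb_deriv (a := -b) (w := b) hne
    have hcb : (1 : ℂ) + (starRingEnd ℂ) (-b) * b = 1 - (Complex.normSq b : ℂ) := by
      rw [map_neg, neg_mul, mul_comm, Complex.mul_conj]; ring
    rw [hcb, Complex.normSq_neg] at h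
    exact h
  have hZ : 0 < 1 - ‖z‖ ^ 2 := by nlinarith [norm_nonneg z]
  have hB : 0 < 1 - ‖b‖ ^ 2 := by nlinarith [norm_nonneg b]
  have hF' : HasDerivAt F
      ((1 - Complex.normSq b) / (1 - Complex.normSq b) ^ 2 *
        (deriv ω z * (1 - Complex.normSq z))) 0 := by
    have h1 : HasDerivAt (fun v => ω (φ v)) (deriv ω z * (1 - Complex.normSq z)) 0 := by
      have hc : HasDerivAt ω (deriv ω z) (φ 0) := by rwa [hφ0]
      exact hc.comp 0 hφ'
    have h2 : HasDerivAt ψ ((1 - (Complex.normSq b : ℂ)) / (1 - (Complex.normSq b : ℂ)) ^ 2)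
        ((fun v => ω (φ v)) 0) := by
      simp only [hφ0]; exact hψ'
    exact h2.comp 0 h1
  have hFderiv : deriv F 0 = (1 - Complex.normSq b) / (1 - Complex.normSq b) ^ 2 *
      (deriv ω z * (1 - Complex.normSq z)) := hF'.deriv
  have hbound : ‖deriv F 0‖ ≤ 1 := by
    exact Complex.norm_deriv_le_one_of_mapsTo_ball hFd (by rw [hF0]; exact hFm.mono_right ball_subset_closedBall) one_pos
  rw [hFderiv] at hbound
  have e1 : ‖(1:ℂ) - (Complex.normSq b : ℂ)‖ = 1 - ‖b‖ ^ 2 := by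
    rw [show ((1:ℂ) - (Complex.normSq b : ℂ)) = ((1 - Complex.normSq b : ℝ) : ℂ) by push_cast; ring]
    rw [Complex.norm_real, Real.norm_eq_abs, abs_of_pos]
    · rw [Complex.sq_norm]
    · rw [← Complex.sq_norm]; exact hB
  have e2 : ‖(1:ℂ) - (Complex.normSq z : ℂ)‖ = 1 - ‖z‖ ^ 2 := by
    rw [show ((1:ℂ) - (Complex.normSq z : ℂ)) = ((1 - Complex.normSq z : ℝ) : ℂ) by push_cast; ring]
    rw [Complex.norm_real, Real.norm_eq_abs, abs_of_pos]
    · rw [Complex.sq_norm]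
    · rw [← Complex.sq_norm]; exact hZ
  rw [norm_mul, norm_div, norm_pow, e1, norm_mul, e2] at hbound
  have hq : (1 - ‖b‖ ^ 2) / (1 - ‖b‖ ^ 2) ^ 2 = 1 / (1 - ‖b‖ ^ 2) := by
    field_simp
  rw [hq, div_mul_eq_mul_div, one_mul, div_le_one hB] at hbound
  exact hbound

/-- derivative bound for functions with positive real part on the disk -/
private lemma cbound {p : ℂ → ℂ} (hd : DifferentiableOn ℂ p (ball 0 1))
    (hre : ∀ w ∈ ball (0:ℂ) 1, 0 < (p w).re) {z : ℂ} (hz : z ∈ ball (0:ℂ) 1) :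
    ‖deriv p z‖ * (1 - ‖z‖ ^ 2) ≤ 2 * (p z).re := by
  set ω : ℂ → ℂ := fun w => (p w - 1) / (p w + 1) with hω
  have hne : ∀ w ∈ ball (0:ℂ) 1, p w + 1 ≠ 0 := by
    intro w hw h
    have := hre w hw
    have : (p w + 1).re = 0 := by rw [h]; simp
    simp only [Complex.add_re, Complex.one_re] at this
    linarith [hre w hw]
  have hsq : ∀ w ∈ ball (0:ℂ) 1,
      ‖p w - 1‖ ^ 2 + 4 * (p w).re = ‖p w + 1‖ ^ 2 := by
    intro w hw
    rw [Complex.sq_norm, Complex.sq_norm, Complex.normSq_apply, Complex.normSq_apply]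
    simp only [Complex.add_re, Complex.add_im, Complex.sub_re, Complex.sub_im,
      Complex.one_re, Complex.one_im]
    ring
  have hmem : MapsTo ω (ball 0 1) (ball 0 1) := by
    intro w hw
    have h1 : 0 < ‖p w + 1‖ := by
      simpa [norm_pos_iff] using hne w hw
    rw [mem_ball_zero_iff]
    show ‖(p w - 1) / (p w + 1)‖ < 1
    rw [norm_div, div_lt_one h1]
    have := hsq w hw
    nlinarith [hre w hw, norm_nonneg (p w - 1), norm_nonneg (p w + 1)]
  have hωd : DifferentiableOn ℂ ω (ball 0 1) := by
    intro w hw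
    have hdw : DifferentiableAt ℂ p w := hd.differentiableAt (isOpen_ball.mem_nhds hw)
    exact (((hdw.sub_const 1).div (hdw.add_const 1) (hne w hw))).differentiableWithinAt
  have hp' : HasDerivAt p (deriv p z) z :=
    (hd.differentiableAt (isOpen_ball.mem_nhds hz)).hasDerivAt
  have hω' : HasDerivAt ω (2 * deriv p z / (p z + 1) ^ 2) z := by
    have := (hp'.sub_const 1).div (hp'.add_const 1) (hne z hz)
    refine this.congr_deriv (Eq.symm ?_)
    have h0 : (p z + 1) ≠ 0 := hne z hz
    rw [div_left_inj' (pow_ne_zero 2 h0)]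
    ring
  have hpick := spick hωd hmem hz
  rw [hω'.deriv] at hpick
  have h1 : 0 < ‖p z + 1‖ := by
    simpa [norm_pos_iff] using hne z hz
  rw [norm_div, norm_mul, norm_pow] at hpick
  have e2 : ‖(2:ℂ)‖ = 2 := by simp
  rw [e2] at hpick
  have hωz : ‖ω z‖ ^ 2 = ‖p z - 1‖ ^ 2 / ‖p z + 1‖ ^ 2 := by
    rw [hω]; rw [norm_div, div_pow]
  rw [hωz] at hpick
  have hkey := hsq z hz
  have hz2 : 0 ≤ 1 - ‖z‖ ^ 2 := by
    have : ‖z‖ < 1 := mem_ball_zero_iff.1 hz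
    nlinarith [norm_nonneg z]
  set D := ‖deriv p z‖ with hD
  set C := ‖p z + 1‖ with hC
  have hC2 : (0:ℝ) < C ^ 2 := by positivity
  have hmul := mul_le_mul_of_nonneg_right hpick hC2.le
  have e3 : 2 * D / C ^ 2 * (1 - ‖z‖ ^ 2) * C ^ 2 = 2 * D * (1 - ‖z‖ ^ 2) := by
    field_simp
  have e4 : (1 - ‖p z - 1‖ ^ 2 / C ^ 2) * C ^ 2 = C ^ 2 - ‖p z - 1‖ ^ 2 := by
    field_simp
  rw [e3, e4] at hmul
  linarith

set_option maxHeartbeats 1000000 in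
theorem stmt_16 (lam α : ℝ) (hlam : lam ∈ Set.Ioc (0 : ℝ) 1)
    (hα : α ∈ Set.Ioc (0 : ℝ) 1)
    (f : ℂ → ℂ) (hanal : DifferentiableOn ℂ f (ball (0 : ℂ) 1))
    (hf0 : f 0 = 0) (hf'0 : deriv f 0 = 1)
    (hP : ∀ z ∈ ball (0 : ℂ) 1, z ≠ 0 → 0 < (f z / z).re)
    (hU : ∀ z ∈ ball (0 : ℂ) 1, z ≠ 0 →
      ‖deriv f z * (z / f z) ^ ((α : ℂ) + 1) - 1‖ < lam)
    (R : ℝ)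
    (hR : R = (-(lam + 2 * (α + 1)) +
      Real.sqrt (lam ^ 2 + 8 * lam + 4 * α * lam + 4 * α ^ 2 + 8 * α + 8)) /
      (2 * (lam + 1))) :
    ∀ z : ℂ, ‖z‖ < R →
      deriv f z ≠ 0 ∧ 0 < (1 + z * deriv (deriv f) z / deriv f z).re := by
  obtain ⟨hlam0, hlam1⟩ := hlam
  obtain ⟨hα0, hα1⟩ := hα
  set D : ℝ := lam ^ 2 + 8 * lam + 4 * α * lam + 4 * α ^ 2 + 8 * α + 8 with hDdef
  have hDpos : 0 < D := by positivity
  have hs : Real.sqrt D ^ 2 = D := Real.sq_sqrt hDpos.le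
  have hsnn : 0 ≤ Real.sqrt D := Real.sqrt_nonneg D
  have h2R : 2 * (lam + 1) * R = -(lam + 2 * (α + 1)) + Real.sqrt D := by
    rw [hR]; field_simp
  have hkey : 4 * (lam + 1) * ((1 + lam) * R ^ 2 + (lam + 2 * α + 2) * R - 1) = 0 := by
    linear_combination (2 * (lam + 1) * R + (lam + 2 * α + 2) + Real.sqrt D) * h2R + hs
  have hRroot : (1 + lam) * R ^ 2 + (lam + 2 * α + 2) * R - 1 = 0 := by
    rcases mul_eq_zero.mp hkey with h | h
    · linarith only [h, hlam0]
    · exact h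
  have hRpos : 0 < R := by
    rw [hR]
    apply div_pos _ (by linarith)
    have hlt : lam + 2 * (α + 1) < Real.sqrt D := by
      rw [show lam + 2 * (α + 1) = Real.sqrt ((lam + 2 * (α + 1)) ^ 2) from
        (Real.sqrt_sq (by positivity)).symm]
      apply Real.sqrt_lt_sqrt (by positivity)
      nlinarith only [hlam0, hα0, hDdef]
    linarith only [hlt]
  have hR1 : R < 1 := by nlinarith only [hRroot, hRpos, hlam0, hα0]
  -- basic objects
  set p : ℂ → ℂ := dslope f 0 with hpdef
  have hp0val : p 0 = 1 := by rw [hpdef, dslope_same, hf'0]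
  have hpz : ∀ w : ℂ, w ≠ 0 → p w = f w / w := by
    intro w hw
    rw [hpdef, dslope_of_ne f hw, slope_def_field, hf0, sub_zero, sub_zero]
  have hpd : DifferentiableOn ℂ p (ball 0 1) :=
    (differentiableOn_dslope (ball_mem_nhds _ one_pos)).mpr hanal
  have hpre : ∀ w ∈ ball (0:ℂ) 1, 0 < (p w).re := by
    intro w hw
    rcases eq_or_ne w 0 with rfl | hw0
    · rw [hp0val]; simp
    · rw [hpz w hw0]; exact hP w hw hw0
  have hpne : ∀ w ∈ ball (0:ℂ) 1, p w ≠ 0 := by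
    intro w hw h
    have := hpre w hw
    rw [h] at this; simp at this
  have hpslit : ∀ w ∈ ball (0:ℂ) 1, p w ∈ slitPlane := by
    intro w hw
    exact Complex.mem_slitPlane_iff.mpr (Or.inl (hpre w hw))
  set c : ℂ := (α : ℂ) + 1 with hcdef
  set g : ℂ → ℂ := fun w => deriv f w * p w ^ (-c) with hgdef
  have hf'd : DifferentiableOn ℂ (deriv f) (ball 0 1) :=
    ((hanal.analyticOnNhd isOpen_ball).deriv).differentiableOn
  have hgdAt : ∀ w ∈ ball (0:ℂ) 1, DifferentiableAt ℂ g w := by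
    intro w hw
    have h1 : DifferentiableAt ℂ (deriv f) w :=
      hf'd.differentiableAt (isOpen_ball.mem_nhds hw)
    have h2 : DifferentiableAt ℂ (fun v => p v ^ (-c)) w := by
      have hpat : HasDerivAt p (deriv p w) w :=
        (hpd.differentiableAt (isOpen_ball.mem_nhds hw)).hasDerivAt
      exact (hpat.cpow_const (hpslit w hw)).differentiableAt
    exact h1.mul h2
  have hgd : DifferentiableOn ℂ g (ball 0 1) :=
    fun w hw => (hgdAt w hw).differentiableWithinAt
  have hg0 : g 0 = 1 := by
    rw [hgdef]; simp only [hp0val, hf'0, Complex.one_cpow, one_mul]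
  -- g is close to 1
  have hgU : ∀ w ∈ ball (0:ℂ) 1, ‖g w - 1‖ < lam := by
    intro w hw
    rcases eq_or_ne w 0 with rfl | hw0
    · rw [hg0]; simpa using hlam0
    · have hfw : f w ≠ 0 := by
        intro h
        have := hP w hw hw0
        rw [h] at this; simp at this
      have harg : (p w).arg ≠ Real.pi := by
        intro h
        rcases Complex.arg_eq_pi_iff.mp h with ⟨h1, _⟩
        linarith [hpre w hw]
      have hinv : w / f w = (p w)⁻¹ := by
        rw [hpz w hw0, inv_div]
      have hcpow : (w / f w) ^ c = p w ^ (-c) := by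
        rw [hinv, Complex.inv_cpow _ _ harg, ← Complex.cpow_neg]
      have := hU w hw hw0
      rw [hcpow] at this
      exact this
  have hgmaps : MapsTo g (ball 0 1) (ball (g 0) lam) := by
    intro w hw
    rw [mem_ball, hg0, Complex.dist_eq]
    exact hgU w hw
  have hgs : ∀ w ∈ ball (0:ℂ) 1, ‖g w - 1‖ ≤ lam * ‖w‖ := by
    intro w hw
    have := Complex.norm_dslope_le_div_of_mapsTo_ball hgd (hgmaps.mono_right ball_subset_closedBall) hw
    have h2 := sub_smul_dslope g 0 w
    rw [sub_zero] at h2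
    have : ‖w • dslope g 0 w‖ ≤ ‖w‖ * (lam / 1) := by
      rw [norm_smul]
      exact mul_le_mul_of_nonneg_left this (norm_nonneg w)
    rw [h2] at this
    rw [hg0] at this
    rw [mul_comm]
    simpa using this
  -- pointwise identity f' = g * p^c
  have hfg : ∀ w ∈ ball (0:ℂ) 1, deriv f w = g w * p w ^ c := by
    intro w hw
    rw [hgdef]
    simp only [mul_assoc]
    rw [← Complex.cpow_add _ _ (hpne w hw), neg_add_cancel, Complex.cpow_zero, mul_one]
  -- now fix z
  intro z hzR
  set r : ℝ := ‖z‖ with hrdef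
  have hr0 : 0 ≤ r := norm_nonneg z
  have hr1 : r < 1 := lt_trans hzR hR1
  have hzball : z ∈ ball (0:ℂ) 1 := by
    rw [mem_ball_zero_iff]; exact hr1
  have hQ : 0 < 1 - (lam + 2 * α + 2) * r - (1 + lam) * r ^ 2 := by
    nlinarith only [hRroot, mul_pos (sub_pos.mpr hzR)
      (show (0:ℝ) < lam + 2 * α + 2 + (1 + lam) * (R + r) by
        nlinarith only [hlam0, hα0, hr0, hRpos])]
  have hr2 : 0 < 1 - r ^ 2 := by nlinarith only [hr0, hr1]
  -- nonvanishing of g z and p z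
  have hgz1 : ‖g z - 1‖ ≤ lam * r := hgs z hzball
  have hlamr : lam * r < 1 := by nlinarith only [hlam0, hlam1, hr0, hr1]
  have hgzlb : 1 - lam * r ≤ ‖g z‖ := by
    have htri : ‖(1:ℂ)‖ ≤ ‖g z‖ + ‖g z - 1‖ := by
      have := norm_add_le (g z) (1 - g z)
      simpa [norm_sub_rev] using this
    simp only [norm_one] at htri
    linarith only [htri, hgz1]
  have hgzne : g z ≠ 0 := by
    intro h
    rw [h] at hgzlb; simp at hgzlb; linarith only [hgzlb, hlamr]
  have hpzne : p z ≠ 0 := hpne z hzball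
  have hpczne : p z ^ c ≠ 0 := by
    intro h
    exact hpzne ((Complex.cpow_eq_zero_iff _ _).mp h).1
  have hfz : deriv f z = g z * p z ^ c := hfg z hzball
  have hfzne : deriv f z ≠ 0 := by
    rw [hfz]; exact mul_ne_zero hgzne hpczne
  refine ⟨hfzne, ?_⟩
  -- derivatives at z
  have hp' : HasDerivAt p (deriv p z) z :=
    (hpd.differentiableAt (isOpen_ball.mem_nhds hzball)).hasDerivAt
  have hg' : HasDerivAt g (deriv g z) z := (hgdAt z hzball).hasDerivAt
  set p' : ℂ := deriv p z with hp'def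
  set g' : ℂ := deriv g z with hg'def
  have hcpow : HasDerivAt (fun w => p w ^ c) (c * p z ^ (c - 1) * p') z :=
    hp'.cpow_const (hpslit z hzball)
  have hprod : HasDerivAt (fun w => g w * p w ^ c)
      (g' * p z ^ c + g z * (c * p z ^ (c - 1) * p')) z := hg'.mul hcpow
  have hev : deriv f =ᶠ[nhds z] fun w => g w * p w ^ c :=
    Filter.eventually_of_mem (isOpen_ball.mem_nhds hzball) (fun w hw => hfg w hw)
  have hf'' : HasDerivAt (deriv f)
      (g' * p z ^ c + g z * (c * p z ^ (c - 1) * p')) z :=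
    hprod.congr_of_eventuallyEq hev
  have hd2 : deriv (deriv f) z = g' * p z ^ c + g z * (c * p z ^ (c - 1) * p') :=
    hf''.deriv
  have hpc : p z ^ c = p z ^ (c - 1) * p z := by
    have h := (Complex.cpow_add (c - 1) 1 hpzne).symm
    rw [sub_add_cancel, Complex.cpow_one] at h
    exact h.symm
  have hpc1ne : p z ^ (c - 1) ≠ 0 := by
    intro h
    exact hpzne ((Complex.cpow_eq_zero_iff _ _).mp h).1
  set A : ℂ := z * g' / g z with hAdef
  set B : ℂ := c * (z * p' / p z) with hBdef
  have hsplit : z * deriv (deriv f) z / deriv f z = A + B := by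
    rw [hd2, hfz, hpc, hAdef, hBdef]
    field_simp
  rw [hsplit]
  have hre1 : (1 + (A + B)).re = 1 + A.re + B.re := by
    simp [Complex.add_re]; ring
  rw [hre1]
  have hAre : -(‖A‖) ≤ A.re := (abs_le.mp (Complex.abs_re_le_norm A)).1
  have hBre : -(‖B‖) ≤ B.re := (abs_le.mp (Complex.abs_re_le_norm B)).1
  have hmain : ‖A‖ + ‖B‖ < 1 := by
    -- bound on B via the Carathéodory estimate
    have hcara := cbound hpd hpre hzball
    have hpzpos : 0 < ‖p z‖ := by
      simpa [norm_pos_iff] using hpzne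
    have hgzpos : 0 < ‖g z‖ := by
      simpa [norm_pos_iff] using hgzne
    set P : ℝ := ‖p'‖ with hPdef
    set G : ℝ := ‖g'‖ with hGdef
    set ap : ℝ := ‖p z‖ with hapdef
    set ag : ℝ := ‖g z‖ with hagdef
    have hpre_le : (p z).re ≤ ap := Complex.re_le_norm (p z)
    have habsB : ‖B‖ = (α + 1) * (r * P / ap) := by
      rw [hBdef, norm_mul, norm_div, norm_mul]
      have hc : ‖c‖ = α + 1 := by
        rw [hcdef, show ((α:ℂ) + 1) = ((α + 1 : ℝ) : ℂ) by push_cast; ring,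
          Complex.norm_real, Real.norm_eq_abs, abs_of_pos (by linarith)]
      rw [hc, ← hrdef]
    have hBb : ‖B‖ * (1 - r ^ 2) ≤ 2 * (α + 1) * r := by
      have h1 : P * (1 - r ^ 2) ≤ 2 * ap := by
        rw [← hrdef] at hcara; linarith only [hcara, hpre_le]
      have e : ‖B‖ * (1 - r ^ 2)
          = ((α + 1) * r * (P * (1 - r ^ 2))) / ap := by
        rw [habsB]; field_simp
      rw [e]
      have h2 : ((α + 1) * r * (P * (1 - r ^ 2))) / ap
          ≤ ((α + 1) * r * (2 * ap)) / ap := by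
        gcongr
      have h3 : ((α + 1) * r * (2 * ap)) / ap
          = 2 * (α + 1) * r := by
        field_simp
      linarith only [h2, h3.le]
    -- bound on A via Schwarz--Pick
    set ωA : ℂ → ℂ := fun w => (g w - 1) / (lam : ℂ) with hωA
    have hωAd : DifferentiableOn ℂ ωA (ball 0 1) := fun w hw =>
      (((hgdAt w hw).sub_const 1).div_const _).differentiableWithinAt
    have hωAm : MapsTo ωA (ball 0 1) (ball 0 1) := by
      intro w hw
      rw [mem_ball_zero_iff]
      show ‖(g w - 1) / (lam : ℂ)‖ < 1
      rw [norm_div, Complex.norm_real, Real.norm_eq_abs, abs_of_pos hlam0, div_lt_one hlam0]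
      exact hgU w hw
    have hωA' : HasDerivAt ωA (g' / (lam : ℂ)) z := (hg'.sub_const 1).div_const _
    have hpickA := spick hωAd hωAm hzball
    rw [hωA'.deriv] at hpickA
    set t : ℝ := ‖g z - 1‖ / lam with htdef
    have ht0 : 0 ≤ t := by positivity
    have htr : t ≤ r := by
      rw [htdef, div_le_iff₀ hlam0, mul_comm]; exact hgz1
    have hlamt : ‖g z - 1‖ = lam * t := by
      rw [htdef]; field_simp
    have habsωA : ‖ωA z‖ = t := by
      show ‖(g z - 1) / (lam : ℂ)‖ = t
      rw [norm_div, Complex.norm_real, Real.norm_eq_abs, abs_of_pos hlam0, htdef]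
    have heg : ‖g' / (lam : ℂ)‖ = G / lam := by
      rw [norm_div, Complex.norm_real, Real.norm_eq_abs, abs_of_pos hlam0]
    rw [heg, habsωA, ← hrdef] at hpickA
    have hGb : G * (1 - r ^ 2) ≤ lam * (1 - t ^ 2) := by
      have h := mul_le_mul_of_nonneg_right hpickA hlam0.le
      have e : G / lam * (1 - r ^ 2) * lam = G * (1 - r ^ 2) := by
        field_simp
      rw [e] at h
      linarith only [h]
    have habsA : ‖A‖ = r * G / ag := by
      rw [hAdef, norm_div, norm_mul, ← hrdef]
    have hlt : 1 - lam * t ≤ ag := by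
      have htri : (1:ℝ) ≤ ag + ‖g z - 1‖ := by
        have h := norm_add_le (g z) (1 - g z)
        simp only [add_sub_cancel, norm_one] at h
        have h2 : ‖1 - g z‖ = ‖g z - 1‖ := by
          rw [norm_sub_rev]
        linarith only [h, h2]
      rw [hlamt] at htri; linarith only [htri]
    have hlamt_le : lam * t ≤ lam * r := mul_le_mul_of_nonneg_left htr hlam0.le
    have hlt1 : 0 < 1 - lam * t := by linarith only [hlamt_le, hlamr]
    have hAb : ‖A‖ * ((1 - r ^ 2) * (1 - lam * t)) ≤ lam * r * (1 - t ^ 2) := by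
      have e : ‖A‖ * ((1 - r ^ 2) * (1 - lam * t))
          = (r * G * (1 - r ^ 2)) * ((1 - lam * t) / ag) := by
        rw [habsA]; field_simp
      rw [e]
      have h1 : (1 - lam * t) / ag ≤ 1 := by
        rw [div_le_one hgzpos]; exact hlt
      have h2 : (0:ℝ) ≤ r * G * (1 - r ^ 2) := by positivity
      have h3 := mul_le_of_le_one_right h2 h1
      have h4 := mul_le_mul_of_nonneg_left hGb hr0
      calc (r * G * (1 - r ^ 2)) * ((1 - lam * t) / ag)
          ≤ r * G * (1 - r ^ 2) := h3
        _ = r * (G * (1 - r ^ 2)) := by ring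
        _ ≤ r * (lam * (1 - t ^ 2)) := h4
        _ = lam * r * (1 - t ^ 2) := by ring
    have hX : 0 < (1 - r ^ 2) * (1 - lam * t) := mul_pos hr2 hlt1
    have hBb' : ‖B‖ * ((1 - r ^ 2) * (1 - lam * t))
        ≤ 2 * (α + 1) * r * (1 - lam * t) := by
      have h := mul_le_mul_of_nonneg_right hBb hlt1.le
      calc ‖B‖ * ((1 - r ^ 2) * (1 - lam * t))
          = ‖B‖ * (1 - r ^ 2) * (1 - lam * t) := by ring
        _ ≤ 2 * (α + 1) * r * (1 - lam * t) := h
    have hmul : (1 - t) * (1 + t) ≤ (1 - lam * t) * (1 + r) := by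
      have ha : 1 - t ≤ 1 - lam * t := by
        nlinarith only [mul_nonneg ht0 (sub_nonneg.mpr hlam1)]
      have hb : 1 + t ≤ 1 + r := by linarith only [htr]
      have hc : (0:ℝ) ≤ 1 + t := by linarith only [ht0]
      exact mul_le_mul ha hb hc hlt1.le
    have h5 : lam * r * (1 - t ^ 2) ≤ lam * r * (1 + r) * (1 - lam * t) := by
      have := mul_le_mul_of_nonneg_left hmul (mul_nonneg hlam0.le hr0)
      nlinarith only [this]
    have hQ' : lam * r * (1 + r) + 2 * (α + 1) * r < 1 - r ^ 2 := by linarith only [hQ]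
    have hfinal : (‖A‖ + ‖B‖) * ((1 - r ^ 2) * (1 - lam * t))
        < 1 * ((1 - r ^ 2) * (1 - lam * t)) := by
      calc (‖A‖ + ‖B‖) * ((1 - r ^ 2) * (1 - lam * t))
          = ‖A‖ * ((1 - r ^ 2) * (1 - lam * t))
            + ‖B‖ * ((1 - r ^ 2) * (1 - lam * t)) := by ring
        _ ≤ lam * r * (1 - t ^ 2) + 2 * (α + 1) * r * (1 - lam * t) := by
            linarith only [hAb, hBb']
        _ ≤ lam * r * (1 + r) * (1 - lam * t) + 2 * (α + 1) * r * (1 - lam * t) := by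
            linarith only [h5]
        _ = (lam * r * (1 + r) + 2 * (α + 1) * r) * (1 - lam * t) := by ring
        _ < (1 - r ^ 2) * (1 - lam * t) := mul_lt_mul_of_pos_right hQ' hlt1
        _ = 1 * ((1 - r ^ 2) * (1 - lam * t)) := by ring
    exact lt_of_mul_lt_mul_right hfinal hX.le
  linarith only [hAre, hBre, hmain]
end

section
/- Let 0 < α ≤ 1. Let f be analytic on the open unit disk 𝔻 with f(0) = 0 and f′(0) = 1, suppose Re(f(z)/z) > 0 for all z ∈ 𝔻 \ {0} (with f(z)/z → 1 as z → 0), and suppose |f′(z)·(z/f(z))^{α+1} − 1| < 1 for all z ∈ 𝔻 \ {0}, where the power is the principal branch. Set R_α = ( −(3 + 2α) + √(17 + 12α + 4α²) ) / 4. Then for every z with |z| < R_α, f′(z) ≠ 0 and Re(1 + z f″(z)/f′(z)) > 0; that is, f is convex in |z| < R_α. -/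
open Complex Metric

lemma normSq_mobius (a z : ℂ) :
    Complex.normSq (1 + (starRingEnd ℂ) a * z) - Complex.normSq (z + a)
      = (1 - Complex.normSq a) * (1 - Complex.normSq z) := by
  have h : ((Complex.normSq (1 + (starRingEnd ℂ) a * z) : ℂ))
      - Complex.normSq (z + a) = (1 - Complex.normSq a) * (1 - Complex.normSq z) := by
    rw [← Complex.mul_conj, ← Complex.mul_conj, ← Complex.mul_conj, ← Complex.mul_conj]
    simp only [map_add, map_mul, map_one, Complex.conj_conj]
    ring
  exact_mod_cast h

lemma abs_mobius_lt_one {a z : ℂ} (ha : ‖a‖ < 1) (hz : ‖z‖ < 1) :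
    ‖(z + a) / (1 + (starRingEnd ℂ) a * z)‖ < 1 := by
  have key := normSq_mobius a z
  have ha' : Complex.normSq a < 1 := by rw [← Complex.sq_norm]; nlinarith [norm_nonneg a]
  have hz' : Complex.normSq z < 1 := by rw [← Complex.sq_norm]; nlinarith [norm_nonneg z]
  have hlt : Complex.normSq (z + a) < Complex.normSq (1 + (starRingEnd ℂ) a * z) := by nlinarith
  have hden : ‖1 + (starRingEnd ℂ) a * z‖ ≠ 0 := by
    intro h0
    rw [norm_eq_zero] at h0
    rw [h0] at hlt
    simp only [map_zero] at hlt
    exact absurd hlt (Complex.normSq_nonneg _).not_gt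
  rw [norm_div, div_lt_one (lt_of_le_of_ne (norm_nonneg _) (Ne.symm hden))]
  have := Complex.sq_norm (z + a)
  have := Complex.sq_norm (1 + (starRingEnd ℂ) a * z)
  nlinarith [norm_nonneg (z + a), norm_nonneg (1 + (starRingEnd ℂ) a * z)]

lemma mobius_den_ne {a z : ℂ} (ha : ‖a‖ < 1) (hz : ‖z‖ < 1) :
    1 + (starRingEnd ℂ) a * z ≠ 0 := by
  intro h0
  have : ‖(starRingEnd ℂ) a * z‖ = 1 := by
    have : (starRingEnd ℂ) a * z = -1 := by linear_combination h0
    rw [this]; simp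
  rw [norm_mul, Complex.norm_conj] at this
  nlinarith [norm_nonneg a, norm_nonneg z]


lemma mobius_hasDerivAt (c d : ℂ) {z : ℂ} (h : 1 + c * z ≠ 0) :
    HasDerivAt (fun w => (w + d) / (1 + c * w)) ((1 - c * d) / (1 + c * z) ^ 2) z := by
  have := ((hasDerivAt_id z).add_const d).div
    (((hasDerivAt_id z).const_mul c).const_add 1) h
  rw [show (1 - c * d) / (1 + c * z) ^ 2 = (1 * (1 + c * id z) - (id z + d) * (c * 1)) / (1 + c * id z) ^ 2 by simp only [id]; ring]
  exact this

lemma schwarzPick {g : ℂ → ℂ} (hd : DifferentiableOn ℂ g (ball 0 1))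
    (hm : ∀ z ∈ ball (0:ℂ) 1, ‖g z‖ < 1) {a : ℂ} (ha : ‖a‖ < 1) :
    ‖deriv g a‖ * (1 - ‖a‖ ^ 2) ≤ 1 - ‖g a‖ ^ 2 := by
  have hamem : a ∈ ball (0:ℂ) 1 := by simpa [mem_ball_zero_iff] using ha
  set b := g a with hb
  have hbabs : ‖b‖ < 1 := hm a hamem
  set ψ : ℂ → ℂ := fun z => (z + a) / (1 + (starRingEnd ℂ) a * z) with hψ
  set σ : ℂ → ℂ := fun w => (w + (-b)) / (1 + (starRingEnd ℂ) (-b) * w) with hσ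
  have hψmem : ∀ z ∈ ball (0:ℂ) 1, ψ z ∈ ball (0:ℂ) 1 := fun z hz => by
    rw [mem_ball_zero_iff] at hz ⊢
    exact abs_mobius_lt_one ha hz
  have hσmem : ∀ w ∈ ball (0:ℂ) 1, σ w ∈ ball (0:ℂ) 1 := fun w hw => by
    rw [mem_ball_zero_iff] at hw ⊢
    exact abs_mobius_lt_one (by simpa using hbabs) hw
  set F : ℂ → ℂ := σ ∘ g ∘ ψ with hF
  have hψ0 : ψ 0 = a := by simp [hψ]
  have hF0 : F 0 = 0 := by
    simp only [hF, Function.comp_apply, hψ0, ← hb, hσ]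
    simp
  have hψdiff : DifferentiableOn ℂ ψ (ball 0 1) := by
    intro z hz
    rw [mem_ball_zero_iff] at hz
    exact (((differentiableAt_id.add_const a).div
      ((differentiableAt_const _).add ((differentiableAt_const _).mul differentiableAt_id))
      (mobius_den_ne ha hz))).differentiableWithinAt
  have hσdiffAt : ∀ w, ‖w‖ < 1 → DifferentiableAt ℂ σ w := by
    intro w hw
    exact ((differentiableAt_id.add_const (-b)).div
      ((differentiableAt_const _).add ((differentiableAt_const _).mul differentiableAt_id))
      (mobius_den_ne (by simpa using hbabs) hw))
  have hFdiff : DifferentiableOn ℂ F (ball 0 1) := by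
    intro z hz
    have h1 : DifferentiableWithinAt ℂ ψ (ball 0 1) z := hψdiff z hz
    have h2 : DifferentiableAt ℂ g (ψ z) :=
      (hd (ψ z) (hψmem z hz)).differentiableAt (isOpen_ball.mem_nhds (hψmem z hz))
    have h3 : DifferentiableAt ℂ σ (g (ψ z)) := hσdiffAt _ (hm _ (hψmem z hz))
    exact h3.comp_differentiableWithinAt z (h2.comp_differentiableWithinAt z h1)
  have hFmaps : Set.MapsTo F (ball (0:ℂ) 1) (ball (0:ℂ) 1) := by
    intro z hz
    exact hσmem _ (hm _ (hψmem z hz) |> fun h => mem_ball_zero_iff.2 h)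
  -- abs-to-real identities
  have e1 : 1 - (starRingEnd ℂ) b * b = ((1 - ‖b‖ ^ 2 : ℝ) : ℂ) := by
    rw [mul_comm, Complex.mul_conj, ← Complex.sq_norm]
    push_cast
    ring
  have e2 : 1 - (starRingEnd ℂ) a * a = ((1 - ‖a‖ ^ 2 : ℝ) : ℂ) := by
    rw [mul_comm, Complex.mul_conj, ← Complex.sq_norm]
    push_cast
    ring
  have hb2 : (0:ℝ) < 1 - ‖b‖ ^ 2 := by nlinarith [norm_nonneg b]
  have ha2 : (0:ℝ) < 1 - ‖a‖ ^ 2 := by nlinarith [norm_nonneg a]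
  have hbne : 1 - (starRingEnd ℂ) b * b ≠ 0 := by
    rw [e1]
    exact_mod_cast hb2.ne'
  -- derivative computations
  have hψder : HasDerivAt ψ (1 - (starRingEnd ℂ) a * a) 0 := by
    have := mobius_hasDerivAt ((starRingEnd ℂ) a) a (z := 0) (by simp)
    simpa using this
  have hgder : HasDerivAt g (deriv g a) a :=
    ((hd a hamem).differentiableAt (isOpen_ball.mem_nhds hamem)).hasDerivAt
  have hσder : HasDerivAt σ ((1 - (starRingEnd ℂ) b * b)⁻¹) b := by
    have hden : 1 + (starRingEnd ℂ) (-b) * b ≠ 0 := by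
      rw [map_neg]
      convert hbne using 1
      ring
    have := mobius_hasDerivAt ((starRingEnd ℂ) (-b)) (-b) (z := b) hden
    convert this using 1
    rw [map_neg]
    rw [show 1 - -(starRingEnd ℂ) b * -b = 1 - (starRingEnd ℂ) b * b by ring,
      show 1 + -(starRingEnd ℂ) b * b = 1 - (starRingEnd ℂ) b * b by ring, sq]
    rw [eq_div_iff (mul_ne_zero hbne hbne)]
    field_simp
  have h1 : HasDerivAt (g ∘ ψ) (deriv g a * (1 - (starRingEnd ℂ) a * a)) 0 :=
    HasDerivAt.comp 0 (by rw [hψ0]; exact hgder) hψder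
  have hgψ0 : (g ∘ ψ) 0 = b := by simp [Function.comp_apply, hψ0, hb]
  have hFder : HasDerivAt F ((1 - (starRingEnd ℂ) b * b)⁻¹ *
      (deriv g a * (1 - (starRingEnd ℂ) a * a))) 0 :=
    HasDerivAt.comp 0 (by rw [hgψ0]; exact hσder) h1
  have hSch : ‖deriv F 0‖ ≤ 1 :=
    Complex.norm_deriv_le_one_of_mapsTo_ball hFdiff
      (by rw [hF0]; exact hFmaps.mono_right ball_subset_closedBall) one_pos
  rw [hFder.deriv] at hSch
  rw [norm_mul, norm_mul, norm_inv, e1, e2, Complex.norm_of_nonneg hb2.le,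
    Complex.norm_of_nonneg ha2.le] at hSch
  calc ‖deriv g a‖ * (1 - ‖a‖ ^ 2)
      = ((1 - ‖b‖ ^ 2)⁻¹ * (‖deriv g a‖ * (1 - ‖a‖ ^ 2)))
        * (1 - ‖b‖ ^ 2) := by field_simp
    _ ≤ 1 * (1 - ‖b‖ ^ 2) := mul_le_mul_of_nonneg_right hSch hb2.le
    _ = 1 - ‖b‖ ^ 2 := one_mul _

lemma carath_abs_lt_one {u : ℂ} (h : 0 < u.re) : ‖(u - 1) / (u + 1)‖ < 1 := by
  have key : Complex.normSq (u + 1) - Complex.normSq (u - 1) = 4 * u.re := by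
    have h2 : ((Complex.normSq (u + 1) : ℂ)) - Complex.normSq (u - 1) = 4 * u.re := by
      rw [← Complex.mul_conj, ← Complex.mul_conj]
      simp only [map_add, map_sub, map_one]
      rw [show (u + 1) * ((starRingEnd ℂ) u + 1) - (u - 1) * ((starRingEnd ℂ) u - 1)
        = 2 * (u + (starRingEnd ℂ) u) by ring, Complex.add_conj]
      push_cast
      ring
    exact_mod_cast h2
  have hne : u + 1 ≠ 0 := by
    intro h0
    have : (u + 1).re = 0 := by rw [h0]; simp
    simp only [Complex.add_re, Complex.one_re] at this
    linarith
  have hpos : 0 < ‖u + 1‖ := by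
    exact norm_pos_iff.2 hne
  rw [norm_div, div_lt_one hpos]
  have h1 := Complex.sq_norm (u + 1)
  have h2 := Complex.sq_norm (u - 1)
  nlinarith [norm_nonneg (u - 1), norm_nonneg (u + 1)]


set_option maxHeartbeats 1000000 in
theorem stmt_17 (α : ℝ) (hα : α ∈ Set.Ioc (0 : ℝ) 1)
    (f : ℂ → ℂ) (hanal : DifferentiableOn ℂ f (ball (0 : ℂ) 1))
    (hf0 : f 0 = 0) (hf'0 : deriv f 0 = 1)
    (hP : ∀ z ∈ ball (0 : ℂ) 1, z ≠ 0 → 0 < (f z / z).re)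
    (hU : ∀ z ∈ ball (0 : ℂ) 1, z ≠ 0 →
      ‖deriv f z * (z / f z) ^ ((α : ℂ) + 1) - 1‖ < 1)
    (R : ℝ)
    (hR : R = (-(3 + 2 * α) + Real.sqrt (17 + 12 * α + 4 * α ^ 2)) / 4) :
    ∀ z : ℂ, ‖z‖ < R →
      deriv f z ≠ 0 ∧ 0 < (1 + z * deriv (deriv f) z / deriv f z).re := by
  obtain ⟨hα0, hα1⟩ := hα
  set c : ℂ := (α : ℂ) + 1 with hc
  -- the function p = f z / z, regularized
  set p : ℂ → ℂ := dslope f 0 with hp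
  have hp0 : p 0 = 1 := by rw [hp, dslope_same, hf'0]
  have hpz : ∀ z : ℂ, z ≠ 0 → p z = f z / z := by
    intro z hz
    rw [hp, dslope_of_ne _ hz, slope_def_field, hf0]
    simp
  have hfp : ∀ z : ℂ, f z = z * p z := by
    intro z
    rcases eq_or_ne z 0 with rfl | hz
    · simp [hf0]
    · rw [hpz z hz]; field_simp
  have hpd : DifferentiableOn ℂ p (ball 0 1) := by
    intro z hz
    rcases eq_or_ne z 0 with rfl | hz0
    · obtain ⟨ps, hps⟩ := (hanal.analyticOnNhd isOpen_ball) 0 (mem_ball_self one_pos)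
      exact (hps.has_fpower_series_dslope_fslope.analyticAt).differentiableAt.differentiableWithinAt
    · exact (differentiableWithinAt_dslope_of_ne hz0).2 (hanal z hz)
  have hpre : ∀ z ∈ ball (0:ℂ) 1, 0 < (p z).re := by
    intro z hz
    rcases eq_or_ne z 0 with rfl | hz0
    · rw [hp0]; norm_num
    · rw [hpz z hz0]; exact hP z hz hz0
  have hpne : ∀ z ∈ ball (0:ℂ) 1, p z ≠ 0 := by
    intro z hz h0
    have := hpre z hz
    rw [h0] at this
    simp at this
  have hslit : ∀ z ∈ ball (0:ℂ) 1, p z ∈ Complex.slitPlane := fun z hz =>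
    Complex.mem_slitPlane_iff.2 (Or.inl (hpre z hz))
  have hf'd : DifferentiableOn ℂ (deriv f) (ball 0 1) :=
    ((hanal.analyticOnNhd isOpen_ball).deriv).differentiableOn
  -- the function w
  set w : ℂ → ℂ := fun z => deriv f z / (p z) ^ c with hw
  have hpcne : ∀ z ∈ ball (0:ℂ) 1, (p z) ^ c ≠ 0 := by
    intro z hz h0
    rw [Complex.cpow_eq_zero_iff] at h0
    exact hpne z hz h0.1
  have hw0 : w 0 = 1 := by
    rw [hw]
    simp only [hp0, hf'0, Complex.one_cpow]
    norm_num
  have hwdiff : DifferentiableOn ℂ w (ball 0 1) := by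
    intro z hz
    have h1 : DifferentiableAt ℂ (fun z => p z ^ c) z :=
      (((hpd z hz).differentiableAt (isOpen_ball.mem_nhds hz)).hasDerivAt.cpow_const
        (hslit z hz)).differentiableAt
    exact (((hf'd z hz).differentiableAt (isOpen_ball.mem_nhds hz)).div h1
      (hpcne z hz)).differentiableWithinAt
  have hfw : ∀ z ∈ ball (0:ℂ) 1, deriv f z = w z * p z ^ c := by
    intro z hz
    rw [hw]
    show deriv f z = deriv f z / p z ^ c * p z ^ c
    rw [div_mul_cancel₀ _ (hpcne z hz)]
  have hwU : ∀ z ∈ ball (0:ℂ) 1, ‖w z - 1‖ < 1 := by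
    intro z hz
    rcases eq_or_ne z 0 with rfl | hz0
    · simp [hw0]
    · have h2 : z / f z = (p z)⁻¹ := by
        rw [hfp z, div_mul_eq_div_div, div_self hz0, one_div]
      have h3 : w z = deriv f z * (z / f z) ^ c := by
        rw [h2, Complex.inv_cpow _ _ (Complex.slitPlane_arg_ne_pi (hslit z hz)), hw]
        show deriv f z / p z ^ c = deriv f z * (p z ^ c)⁻¹
        rw [div_eq_mul_inv]
      rw [h3]
      exact hU z hz hz0
  -- Schwarz for w - 1
  have hhd : DifferentiableOn ℂ (fun z => w z - 1) (ball 0 1) := fun z hz =>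
    (hwdiff z hz).sub_const 1
  have hhm : ∀ z ∈ ball (0:ℂ) 1, ‖(fun z => w z - 1) z‖ < 1 := fun z hz => hwU z hz
  have hWS : ∀ z : ℂ, ‖z‖ < 1 → ‖w z - 1‖ ≤ ‖z‖ := by
    intro z hz
    have := Complex.norm_le_norm_of_mapsTo_ball hhd
      (fun x hx => ball_subset_closedBall (mem_ball_zero_iff.2 (hhm x hx))) (by simp [hw0]) hz
    simpa using this
  -- the function q
  have hpne1 : ∀ z ∈ ball (0:ℂ) 1, p z + 1 ≠ 0 := by
    intro z hz h0
    have h1 := hpre z hz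
    have : (p z + 1).re = 0 := by rw [h0]; simp
    simp only [Complex.add_re, Complex.one_re] at this
    linarith
  set q : ℂ → ℂ := fun z => (p z - 1) / (p z + 1) with hq
  have hq0 : q 0 = 0 := by rw [hq]; simp [hp0]
  have hqd : DifferentiableOn ℂ q (ball 0 1) := fun z hz =>
    ((hpd z hz).sub_const 1).div ((hpd z hz).add_const 1) (hpne1 z hz)
  have hqlt : ∀ z ∈ ball (0:ℂ) 1, ‖q z‖ < 1 := fun z hz =>
    carath_abs_lt_one (hpre z hz)
  have hQS : ∀ z : ℂ, ‖z‖ < 1 → ‖q z‖ ≤ ‖z‖ := by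
    intro z hz
    have := Complex.norm_le_norm_of_mapsTo_ball hqd
      (fun x hx => ball_subset_closedBall (mem_ball_zero_iff.2 (hqlt x hx))) hq0 hz
    simpa using this
  have hqp : ∀ z ∈ ball (0:ℂ) 1, p z = (1 + q z) / (1 - q z) := by
    intro z hz
    have h0 := hpne1 z hz
    have h1 : 1 - q z ≠ 0 := by
      intro h1
      have h2 : ‖q z‖ < 1 := hqlt z hz
      have : q z = 1 := by linear_combination -h1
      rw [this] at h2
      simp at h2
    rw [hq] at h1 ⊢
    field_simp
    field_simp at h1
    ring
  -- facts about R
  have hs2 : (Real.sqrt (17 + 12 * α + 4 * α ^ 2)) ^ 2 = 17 + 12 * α + 4 * α ^ 2 :=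
    Real.sq_sqrt (by positivity)
  have hRq : 2 * R ^ 2 + (3 + 2 * α) * R - 1 = 0 := by
    rw [hR]
    linear_combination hs2 / 8
  -- main part
  intro z₀ hz₀
  set r : ℝ := ‖z₀‖ with hr
  have hr0 : 0 ≤ r := norm_nonneg z₀
  have hRpos : 0 < R := lt_of_le_of_lt hr0 hz₀
  have hR1 : R < 1 := by nlinarith
  have hr1 : r < 1 := lt_trans hz₀ hR1
  have hz₀b : z₀ ∈ ball (0:ℂ) 1 := mem_ball_zero_iff.2 (by exact hr1)
  have hr2 : (0:ℝ) < 1 - r ^ 2 := by nlinarith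
  -- differentiability at z₀
  have hpa : DifferentiableAt ℂ p z₀ := (hpd z₀ hz₀b).differentiableAt (isOpen_ball.mem_nhds hz₀b)
  have hwa : DifferentiableAt ℂ w z₀ := (hwdiff z₀ hz₀b).differentiableAt (isOpen_ball.mem_nhds hz₀b)
  have hqa : DifferentiableAt ℂ q z₀ := (hqd z₀ hz₀b).differentiableAt (isOpen_ball.mem_nhds hz₀b)
  -- abbreviations
  have hWne : w z₀ ≠ 0 := by
    intro h0
    have h1 := hWS z₀ hr1
    rw [h0] at h1
    simp only [zero_sub, norm_neg, norm_one] at h1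
    have : r < 1 := hr1
    rw [← hr] at h1
    linarith
  have hf'ne : deriv f z₀ ≠ 0 := by
    rw [hfw z₀ hz₀b]
    exact mul_ne_zero hWne (hpcne z₀ hz₀b)
  refine ⟨hf'ne, ?_⟩
  -- second derivative
  have hPder : HasDerivAt (fun z => p z ^ c) (c * p z₀ ^ (c - 1) * deriv p z₀) z₀ :=
    hpa.hasDerivAt.cpow_const (hslit z₀ hz₀b)
  have hprod : HasDerivAt (fun z => w z * p z ^ c)
      (deriv w z₀ * p z₀ ^ c + w z₀ * (c * p z₀ ^ (c - 1) * deriv p z₀)) z₀ :=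
    hwa.hasDerivAt.mul hPder
  have hf''eq : deriv (deriv f) z₀ =
      deriv w z₀ * p z₀ ^ c + w z₀ * (c * p z₀ ^ (c - 1) * deriv p z₀) := by
    have hev : deriv f =ᶠ[nhds z₀] fun z => w z * p z ^ c :=
      Filter.eventuallyEq_of_mem (isOpen_ball.mem_nhds hz₀b) (fun z hz => hfw z hz)
    rw [hev.deriv_eq]
    exact hprod.deriv
  have hPc1 : p z₀ ^ c = p z₀ ^ (c - 1) * p z₀ := by
    conv_lhs => rw [show c = (c - 1) + 1 by ring]
    rw [Complex.cpow_add _ _ (hpne z₀ hz₀b), Complex.cpow_one]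
  have hPc1ne : p z₀ ^ (c - 1) ≠ 0 := by
    intro h0
    rw [Complex.cpow_eq_zero_iff] at h0
    exact hpne z₀ hz₀b h0.1
  have halg : ∀ (z W W' P P' Pc1 cc : ℂ), W ≠ 0 → P ≠ 0 → Pc1 ≠ 0 →
      1 + z * (W' * (Pc1 * P) + W * (cc * Pc1 * P')) / (W * (Pc1 * P))
        = 1 + z * W' / W + cc * (z * P' / P) := by
    intro z W W' P P' Pc1 cc h1 h2 h3
    field_simp
    ring
  have hkey : 1 + z₀ * deriv (deriv f) z₀ / deriv f z₀
      = 1 + z₀ * deriv w z₀ / w z₀ + c * (z₀ * deriv p z₀ / p z₀) := by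
    rw [hf''eq, hfw z₀ hz₀b, hPc1]
    exact halg z₀ (w z₀) (deriv w z₀) (p z₀) (deriv p z₀) (p z₀ ^ (c - 1)) c
      hWne (hpne z₀ hz₀b) hPc1ne
  rw [hkey]
  set A : ℂ := z₀ * deriv w z₀ / w z₀ with hA
  set B : ℂ := z₀ * deriv p z₀ / p z₀ with hB
  have hre : (1 + A + c * B).re = 1 + A.re + (α + 1) * B.re := by
    have hcr : c = (((α + 1 : ℝ)) : ℂ) := by rw [hc]; push_cast; ring
    rw [hcr]
    simp [Complex.add_re, Complex.re_ofReal_mul]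
  rw [hre]
  -- bound on A
  have hSPw := schwarzPick hhd hhm (a := z₀) hr1
  set t : ℝ := ‖w z₀ - 1‖ with ht
  have ht0 : 0 ≤ t := norm_nonneg _
  have htr : t ≤ r := hWS z₀ hr1
  have hWlb : 1 - t ≤ ‖w z₀‖ := by
    have h1 : ‖(1:ℂ)‖ ≤ ‖w z₀‖ + ‖w z₀ - 1‖ := by
      calc ‖(1:ℂ)‖ = ‖w z₀ - (w z₀ - 1)‖ := by ring_nf
        _ ≤ ‖w z₀‖ + ‖w z₀ - 1‖ := norm_sub_le _ _
    simp only [norm_one] at h1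
    linarith
  have hderiv_h : deriv (fun z => w z - 1) z₀ = deriv w z₀ := deriv_sub_const 1
  rw [hderiv_h, ← hr] at hSPw
  -- hSPw : abs (deriv w z₀) * (1 - abs z₀ ^ 2) ≤ 1 - abs (w z₀ - 1) ^ 2
  have h1t : (0:ℝ) ≤ 1 - t := by linarith
  have hAbound : ‖A‖ * (1 - r ^ 2) ≤ r * (1 + r) := by
    have hWpos : 0 < ‖w z₀‖ := by exact norm_pos_iff.2 hWne
    have hAeq : ‖A‖ * ‖w z₀‖ = r * ‖deriv w z₀‖ := by
      rw [hA, norm_div, norm_mul,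
        div_mul_cancel₀ _ (hWpos.ne' : ‖w z₀‖ ≠ 0), hr]
    have k1 : ‖A‖ * (1 - r ^ 2) * ‖w z₀‖
        = r * (‖deriv w z₀‖ * (1 - r ^ 2)) := by
      linear_combination (1 - r ^ 2) * hAeq
    have k2 : r * (‖deriv w z₀‖ * (1 - r ^ 2)) ≤ r * (1 - t ^ 2) :=
      mul_le_mul_of_nonneg_left hSPw hr0
    have k3 : r * (1 - t ^ 2) ≤ r * (1 + r) * (1 - t) := by
      nlinarith [mul_nonneg (mul_nonneg hr0 h1t) (sub_nonneg.2 htr)]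
    have k4 : r * (1 + r) * (1 - t) ≤ r * (1 + r) * ‖w z₀‖ := by
      apply mul_le_mul_of_nonneg_left (by linarith) (by positivity)
    refine le_of_mul_le_mul_right ?_ hWpos
    calc ‖A‖ * (1 - r ^ 2) * ‖w z₀‖
        = r * (‖deriv w z₀‖ * (1 - r ^ 2)) := k1
      _ ≤ r * (1 - t ^ 2) := k2
      _ ≤ r * (1 + r) * (1 - t) := k3
      _ ≤ r * (1 + r) * ‖w z₀‖ := k4
  -- bound on B
  have hSPq := schwarzPick hqd hqlt (a := z₀) hr1
  rw [← hr] at hSPq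
  set s : ℝ := ‖q z₀‖ with hsq
  have hs0 : 0 ≤ s := norm_nonneg _
  have hs1 : s < 1 := hqlt z₀ hz₀b
  have hQabs : ‖q z₀‖ = s := by rw [hsq]
  have hQne : 1 - q z₀ ≠ 0 := by
    intro h0
    have he : q z₀ = 1 := by linear_combination -h0
    rw [he, norm_one] at hQabs
    linarith
  have hQne1 : 1 + q z₀ ≠ 0 := by
    intro h0
    have he : q z₀ = -1 := by linear_combination h0 - (1:ℂ) - (1:ℂ) + 2
    rw [he] at hQabs
    simp only [norm_neg, norm_one] at hQabs
    linarith
  have hpev : p =ᶠ[nhds z₀] fun z => (1 + q z) / (1 - q z) :=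
    Filter.eventuallyEq_of_mem (isOpen_ball.mem_nhds hz₀b) (fun z hz => hqp z hz)
  have hpder2 : HasDerivAt (fun z => (1 + q z) / (1 - q z))
      (((0 + deriv q z₀) * (1 - q z₀) - (1 + q z₀) * (0 - deriv q z₀)) / (1 - q z₀) ^ 2) z₀ :=
    ((hasDerivAt_const z₀ (1:ℂ)).add hqa.hasDerivAt).div
      ((hasDerivAt_const z₀ (1:ℂ)).sub hqa.hasDerivAt) hQne
  have hp'eq : deriv p z₀
      = ((0 + deriv q z₀) * (1 - q z₀) - (1 + q z₀) * (0 - deriv q z₀)) / (1 - q z₀) ^ 2 := by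
    rw [hpev.deriv_eq]
    exact hpder2.deriv
  have hBid : B * ((1 - q z₀) * (1 + q z₀)) = 2 * (z₀ * deriv q z₀) := by
    rw [hB, hp'eq, hqp z₀ hz₀b]
    field_simp
    ring
  have hQprod_lb : 1 - s ^ 2 ≤ ‖(1 - q z₀) * (1 + q z₀)‖ := by
    rw [show (1 - q z₀) * (1 + q z₀) = 1 - q z₀ * q z₀ by ring]
    have h1 := norm_add_le (1 - q z₀ * q z₀) (q z₀ * q z₀)
    rw [sub_add_cancel, norm_one, norm_mul, hQabs] at h1
    have hss : s ^ 2 = s * s := sq s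
    linarith
  have hs2' : s ^ 2 < 1 := pow_lt_one₀ hs0 hs1 two_ne_zero
  have hQprod_pos : 0 < ‖(1 - q z₀) * (1 + q z₀)‖ := by linarith
  have hBbound : ‖B‖ * (1 - r ^ 2) ≤ 2 * r := by
    have habs : ‖B‖ * ‖(1 - q z₀) * (1 + q z₀)‖
        = 2 * (r * ‖deriv q z₀‖) := by
      rw [← norm_mul, hBid, norm_mul, norm_mul, Complex.norm_two, hr]
    refine le_of_mul_le_mul_right ?_ hQprod_pos
    calc ‖B‖ * (1 - r ^ 2) * ‖(1 - q z₀) * (1 + q z₀)‖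
        = 2 * r * (‖deriv q z₀‖ * (1 - r ^ 2)) := by
          linear_combination (1 - r ^ 2) * habs
      _ ≤ 2 * r * (1 - s ^ 2) := by
          apply mul_le_mul_of_nonneg_left hSPq (by linarith)
      _ ≤ 2 * r * ‖(1 - q z₀) * (1 + q z₀)‖ := by
          apply mul_le_mul_of_nonneg_left hQprod_lb (by linarith)
  -- final assembly
  have hnum : 0 < 1 - (3 + 2 * α) * r - 2 * r ^ 2 := by nlinarith [hRq, hz₀, hr0, hRpos]
  have hAre : -(‖A‖) ≤ A.re := by
    have h1 := Complex.abs_re_le_norm A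
    have h2 := neg_abs_le A.re
    rw [abs_le] at h1
    linarith [h1.1]
  have hBre : -(‖B‖) ≤ B.re := by
    have h1 := Complex.abs_re_le_norm B
    rw [abs_le] at h1
    linarith [h1.1]
  have hA2 : -(r * (1 + r)) ≤ A.re * (1 - r ^ 2) := by
    have h3 := mul_le_mul_of_nonneg_right hAre hr2.le
    linarith [hAbound]
  have hB2 : -(2 * r) ≤ B.re * (1 - r ^ 2) := by
    have h3 := mul_le_mul_of_nonneg_right hBre hr2.le
    linarith [hBbound]
  have hfin : 0 < (1 + A.re + (α + 1) * B.re) * (1 - r ^ 2) := by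
    nlinarith [hA2, hnum, mul_le_mul_of_nonneg_left hB2 (by linarith : (0:ℝ) ≤ α + 1)]
  nlinarith [hfin, hr2]
end
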